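/- Let Z be a totally positive 6×n real matrix, and let V, V′ ⊆ ℝ^n be 2-dimensional totally nonnegative subspaces, each of which is orthodox or deviant, with Z(V) = Z(V′). Then the smallest index j such that v_j ≠ 0 for some v ∈ V equals the smallest index j such that v_j ≠ 0 for some v ∈ V′, and the largest index j ≤ n − 1 such that v_j ≠ 0 for some v ∈ V equals the largest index j ≤ n − 1 such that v_j ≠ 0 for some v ∈ V′. -/

import Mathlib

/-- `d` is an `i`-domino (0-based indices). -/
def IsDominoAt {n : ℕ} (i : Fin n) (d : Fin n → ℝ) : Prop :=
  if h : (i : ℕ) + 1 < n then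
    0 < d i * d ⟨(i : ℕ) + 1, h⟩ ∧
      ∀ j : Fin n, (j : ℕ) ≠ (i : ℕ) → (j : ℕ) ≠ (i : ℕ) + 1 → d j = 0
  else
    d i ≠ 0 ∧ ∀ j : Fin n, j ≠ i → d j = 0

/-- A nonzero domino. -/
def IsDomino {n : ℕ} (d : Fin n → ℝ) : Prop := ∃ i : Fin n, IsDominoAt i d

/-- A positive domino with index `i`. -/
def IsPosDominoAt {n : ℕ} (i : Fin n) (d : Fin n → ℝ) : Prop :=
  IsDominoAt i d ∧ 0 < d i

/-- `barVec v` is `v` with its last coordinate replaced by `0`. -/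
def barVec {n : ℕ} (v : Fin n → ℝ) : Fin n → ℝ :=
  fun j => if (j : ℕ) = n - 1 then 0 else v j

/-- All maximal minors of `A` are nonnegative. -/
def MinorsNonneg {k n : ℕ} (A : Matrix (Fin k) (Fin n) ℝ) : Prop :=
  ∀ f : Fin k → Fin n, StrictMono f → 0 ≤ (A.submatrix id f).det

/-- All maximal (`a × a`) minors of the `a × n` matrix `Z` are positive. -/
def MinorsPos {a n : ℕ} (Z : Matrix (Fin a) (Fin n) ℝ) : Prop :=
  ∀ f : Fin a → Fin n, StrictMono f → 0 < (Z.submatrix id f).det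

/-- `V` is a `k`-dimensional totally nonnegative subspace of `ℝ^n`. -/
def IsTNNSubspace (k n : ℕ) (V : Submodule ℝ (Fin n → ℝ)) : Prop :=
  ∃ A : Matrix (Fin k) (Fin n) ℝ,
    LinearIndependent ℝ (fun i => A i) ∧
    Submodule.span ℝ (Set.range fun i => A i) = V ∧
    MinorsNonneg A

/-- `V` is orthodox with standard basis vectors `d, e` and fundamental dominoes
`d1, d2, d3, d4`: the `dᵢ` are linearly independent positive dominoes with 0-based
indices `i1 + 1 < i2 ≤ i3 < i4 - 1` and `i4 ≤ n - 3` (1-based: `i_4 ≤ n - 2`),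
`V = span{d, e}`, `d̄ = d1 + d2` with `d` negative in its last coordinate, and
`ē = d3 + d4` with `e` positive in its last coordinate. -/
def OrthodoxWith {n : ℕ} (V : Submodule ℝ (Fin n → ℝ))
    (d e d1 d2 d3 d4 : Fin n → ℝ) : Prop :=
  (∃ i1 i2 i3 i4 : Fin n,
    IsPosDominoAt i1 d1 ∧ IsPosDominoAt i2 d2 ∧ IsPosDominoAt i3 d3 ∧
    IsPosDominoAt i4 d4 ∧
    (i1 : ℕ) + 1 < (i2 : ℕ) ∧ (i2 : ℕ) ≤ (i3 : ℕ) ∧ (i3 : ℕ) + 1 < (i4 : ℕ) ∧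
    (i4 : ℕ) + 3 ≤ n) ∧
  LinearIndependent ℝ ![d1, d2, d3, d4] ∧
  V = Submodule.span ℝ {d, e} ∧
  barVec d = d1 + d2 ∧ (∀ j : Fin n, (j : ℕ) = n - 1 → d j < 0) ∧
  barVec e = d3 + d4 ∧ (∀ j : Fin n, (j : ℕ) = n - 1 → 0 < e j)

/-- `V` is deviant with standard basis vectors `d, e` and fundamental dominoes
`d1, d2, d3, d4`: the `dᵢ` are linearly independent positive dominoes with 0-based
indices `i1 < i2`, `i2 + 1 < i3 ≤ i4 ≤ n - 3` (1-based: `i_4 ≤ n - 2`),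
`V = span{d, e}`, `d̄ = d1 - d4` with `d` negative in its last coordinate, and
`e = d1 + d2 + d3`. -/
def DeviantWith {n : ℕ} (V : Submodule ℝ (Fin n → ℝ))
    (d e d1 d2 d3 d4 : Fin n → ℝ) : Prop :=
  (∃ i1 i2 i3 i4 : Fin n,
    IsPosDominoAt i1 d1 ∧ IsPosDominoAt i2 d2 ∧ IsPosDominoAt i3 d3 ∧
    IsPosDominoAt i4 d4 ∧
    (i1 : ℕ) < (i2 : ℕ) ∧ (i2 : ℕ) + 1 < (i3 : ℕ) ∧ (i3 : ℕ) ≤ (i4 : ℕ) ∧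
    (i4 : ℕ) + 3 ≤ n) ∧
  LinearIndependent ℝ ![d1, d2, d3, d4] ∧
  V = Submodule.span ℝ {d, e} ∧
  barVec d = d1 - d4 ∧ (∀ j : Fin n, (j : ℕ) = n - 1 → d j < 0) ∧
  e = d1 + d2 + d3

/-- `V` is orthodox (for some choice of data). -/
def IsOrthodox {n : ℕ} (V : Submodule ℝ (Fin n → ℝ)) : Prop :=
  ∃ d e d1 d2 d3 d4 : Fin n → ℝ, OrthodoxWith V d e d1 d2 d3 d4

/-- `V` is deviant (for some choice of data). -/
def IsDeviant {n : ℕ} (V : Submodule ℝ (Fin n → ℝ)) : Prop :=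
  ∃ d e d1 d2 d3 d4 : Fin n → ℝ, DeviantWith V d e d1 d2 d3 d4

namespace ESR
set_option maxHeartbeats 1600000

open Matrix

/-- A monotone sign-coherent 6-block cover of `u`. -/
def Cover {n : ℕ} (u : Fin n → ℝ) : Prop :=
  ∃ (c : Fin n → Fin 6) (ε : Fin 6 → ℝ), Monotone c ∧ (∀ s, ε s = 1 ∨ ε s = -1) ∧
    ∀ j, 0 ≤ ε (c j) * u j

/-- A surjective monotone sign-coherent 6-block cover of `u`. -/
def SCover {n : ℕ} (u : Fin n → ℝ) : Prop :=
  ∃ (c : Fin n → Fin 6) (ε : Fin 6 → ℝ), Monotone c ∧ (∀ s, ε s = 1 ∨ ε s = -1) ∧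
    (∀ j, 0 ≤ ε (c j) * u j) ∧ ∀ s, ∃ j, c j = s

theorem master {n : ℕ} {Z : Matrix (Fin 6) (Fin n) ℝ} (hZ : MinorsPos Z)
    {u : Fin n → ℝ} (hu : Z.mulVec u = 0) (hcov : SCover u) : u = 0 := by
  classical
  by_contra hne
  obtain ⟨j₀, hj₀⟩ : ∃ j, u j ≠ 0 := by
    by_contra h; push_neg at h; exact hne (funext h)
  obtain ⟨c, ε, hc, hε, hcoh, hfib⟩ := hcov
  have hεsq : ∀ s, ε s * ε s = 1 := by
    intro s; rcases hε s with h | h <;> rw [h] <;> norm_num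
  have hεne : ∀ s, ε s ≠ 0 := by
    intro s; rcases hε s with h | h <;> rw [h] <;> norm_num
  set Inh : Fin 6 → Prop := fun s => ∃ j, c j = s ∧ u j ≠ 0 with hInh
  have hpick : ∀ s, c (Classical.choose (hfib s)) = s := fun s => Classical.choose_spec (hfib s)
  set pick : Fin 6 → Fin n := fun s => Classical.choose (hfib s) with hpickdef
  set w : Fin 6 → Fin n → ℝ := fun s j =>
    if c j = s then (if Inh s then ε s * u j else (if j = pick s then 1 else 0)) else 0 with hw
  have w_nonneg : ∀ s j, 0 ≤ w s j := by
    intro s j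
    simp only [hw]
    split_ifs with h1 h2 h3
    · rw [← h1]; exact hcoh j
    all_goals norm_num
  have w_supp : ∀ s j, w s j ≠ 0 → c j = s := by
    intro s j h
    by_contra hcs
    simp only [hw, if_neg hcs] at h
    exact h rfl
  set δ : Fin 6 → ℝ := fun s => if Inh s then ε s else 0 with hδ
  have w_diag : ∀ j, δ (c j) * w (c j) j = u j := by
    intro j
    by_cases h : Inh (c j)
    · simp only [hδ, hw, if_pos h, if_pos rfl]
      rw [← mul_assoc, hεsq, one_mul]
    · have hu0 : u j = 0 := by
        by_contra hu0
        exact h ⟨j, rfl, hu0⟩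
      simp [hδ, if_neg h, hu0]
  have w_witness : ∀ s, ∃ j, c j = s ∧ 0 < w s j := by
    intro s
    by_cases h : Inh s
    · obtain ⟨j, hcj, hne'⟩ := h
      refine ⟨j, hcj, ?_⟩
      have h0 : 0 ≤ w s j := w_nonneg s j
      have : w s j ≠ 0 := by
        simp only [hw, if_pos hcj, if_pos (show Inh s from ⟨j, hcj, hne'⟩)]
        exact mul_ne_zero (hεne s) hne'
      exact lt_of_le_of_ne h0 (Ne.symm this)
    · exact ⟨pick s, hpick s, by simp [hw, hpick s, if_neg h, show c (pick s) = s from hpick s]⟩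
  set R : Matrix (Fin 6) (Fin 6) ℝ := Matrix.of fun s i => ∑ j, w s j * Z i j with hR
  -- strict monotonicity of selections
  have hsel : ∀ r : Fin 6 → Fin n, (∀ s, c (r s) = s) → StrictMono r := by
    intro r hr s s' hss'
    by_contra hle
    push_neg at hle
    have := hc hle
    rw [hr s, hr s'] at this
    exact absurd hss' (not_lt.mpr this)
  -- determinant positivity
  have hdet : 0 < R.det := by
    have hrows : (R : Fin 6 → Fin 6 → ℝ) =
        fun s => ∑ j, w s j • (fun i => Z i j) := by
      funext s i
      simp [hR, Finset.sum_apply]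
    have hdet1 : R.det =
        (Matrix.detRowAlternating : (Fin 6 → ℝ) [⋀^Fin 6]→ₗ[ℝ] ℝ).toMultilinearMap R := by
      rw [AlternatingMap.coe_multilinearMap]
      rfl
    rw [hdet1, hrows]
    rw [show ((fun s => ∑ j, w s j • (fun i => Z i j)) : Fin 6 → Fin 6 → ℝ)
        = fun s => ∑ j ∈ (Finset.univ : Finset (Fin n)), w s j • (fun i => Z i j) from rfl]
    rw [MultilinearMap.map_sum_finset]
    have hsub : ∀ r : Fin 6 → Fin n, StrictMono r →
        0 < (Matrix.detRowAlternating : (Fin 6 → ℝ) [⋀^Fin 6]→ₗ[ℝ] ℝ).toMultilinearMap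
          (fun s => (fun i => Z i (r s))) := by
      intro r hr
      have h1 : (fun s => (fun i => Z i (r s))) = ((Z.submatrix id r)ᵀ : Matrix (Fin 6) (Fin 6) ℝ) := by
        funext s i
        rfl
      rw [AlternatingMap.coe_multilinearMap, h1]
      have h2 : Matrix.detRowAlternating ((Z.submatrix id r)ᵀ : Matrix (Fin 6) (Fin 6) ℝ)
          = ((Z.submatrix id r)ᵀ).det := rfl
      rw [h2, Matrix.det_transpose]
      exact hZ r hr
    have hterm : ∀ r : Fin 6 → Fin n,
        (Matrix.detRowAlternating : (Fin 6 → ℝ) [⋀^Fin 6]→ₗ[ℝ] ℝ).toMultilinearMap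
          (fun s => w s (r s) • (fun i => Z i (r s)))
        = (∏ s, w s (r s)) *
          (Matrix.detRowAlternating : (Fin 6 → ℝ) [⋀^Fin 6]→ₗ[ℝ] ℝ).toMultilinearMap
            (fun s => (fun i => Z i (r s))) := by
      intro r
      rw [MultilinearMap.map_smul_univ, smul_eq_mul]
    apply Finset.sum_pos'
    · intro r _
      rw [hterm r]
      by_cases hr : ∀ s, c (r s) = s
      · exact mul_nonneg (Finset.prod_nonneg fun s _ => w_nonneg s (r s))
          (le_of_lt (hsub r (hsel r hr)))
      · push_neg at hr
        obtain ⟨s, hs⟩ := hr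
        have : w s (r s) = 0 := by
          by_contra h; exact hs (w_supp s (r s) h)
        rw [Finset.prod_eq_zero (Finset.mem_univ s) this, zero_mul]
    · refine ⟨fun s => Classical.choose (w_witness s), ?_, ?_⟩
      · simp [Fintype.mem_piFinset]
      · rw [hterm]
        have hprop : ∀ s, c (Classical.choose (w_witness s)) = s ∧
            0 < w s (Classical.choose (w_witness s)) :=
          fun s => Classical.choose_spec (w_witness s)
        apply mul_pos
        · exact Finset.prod_pos fun s _ => (hprop s).2
        · exact hsub _ (hsel _ fun s => (hprop s).1)
  -- row dependency
  have hdep : Matrix.vecMul δ R = 0 := by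
    funext i
    have : Matrix.vecMul δ R i = ∑ s, δ s * R s i := by
      simp [Matrix.vecMul, dotProduct]
    rw [this]
    have h1 : ∀ s, δ s * R s i = ∑ j, δ s * w s j * Z i j := by
      intro s
      simp only [hR, Matrix.of_apply, Finset.mul_sum, mul_assoc]
    simp only [h1]
    rw [Finset.sum_comm]
    have h2 : ∀ j, ∑ s, δ s * w s j * Z i j = u j * Z i j := by
      intro j
      rw [← Finset.sum_mul]
      congr 1
      rw [Finset.sum_eq_single (c j)]
      · exact w_diag j
      · intro s _ hs
        have : w s j = 0 := by
          by_contra h; exact hs ((w_supp s j h).symm ▸ rfl)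
        rw [this, mul_zero]
      · intro h; exact absurd (Finset.mem_univ _) h
    simp only [h2]
    have : ∑ j, u j * Z i j = Z.mulVec u i := by
      simp [Matrix.mulVec, dotProduct, mul_comm]
    rw [this, hu]
  have hδne : δ ≠ 0 := by
    intro h
    have h0 : Inh (c j₀) := ⟨j₀, rfl, hj₀⟩
    have : δ (c j₀) = 0 := by rw [h]; rfl
    simp only [hδ, if_pos h0] at this
    exact hεne _ this
  have : ∃ v ≠ (0 : Fin 6 → ℝ), Rᵀ.mulVec v = 0 :=
    ⟨δ, hδne, by rw [Matrix.mulVec_transpose]; exact hdep⟩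
  rw [Matrix.exists_mulVec_eq_zero_iff, Matrix.det_transpose] at this
  exact absurd hdet (by rw [this]; exact lt_irrefl 0)



theorem cover_to_scover {n : ℕ} (hn : 6 ≤ n) {u : Fin n → ℝ} (h : Cover u) : SCover u := by
  classical
  have hn0 : 0 < n := by omega
  obtain ⟨c, ε, hc, hε, hcoh⟩ := h
  set pred : Fin n → Fin n := fun j => ⟨(j : ℕ) - 1, lt_of_le_of_lt (Nat.sub_le _ _) j.2⟩
    with hpred
  set D : Finset (Fin n) :=
    Finset.univ.filter (fun j => 0 < (j : ℕ) ∧ c j ≠ c (pred j)) with hD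
  -- boundary existence
  have key : ∀ m : ℕ, ∀ j j' : Fin n, (j' : ℕ) = (j : ℕ) + m → c j ≠ c j' →
      ∃ k ∈ D, (j : ℕ) < (k : ℕ) ∧ (k : ℕ) ≤ (j' : ℕ) := by
    intro m
    induction m with
    | zero =>
      intro j j' hm hne
      exact absurd (congrArg c (Fin.ext (by omega))) hne
    | succ m ih =>
      intro j j' hm hne
      by_cases hc2 : c j = c (pred j')
      · refine ⟨j', ?_, by omega, le_refl _⟩
        rw [hD, Finset.mem_filter]
        refine ⟨Finset.mem_univ _, by omega, ?_⟩
        exact fun hh => hne (hc2.trans hh.symm)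
      · have hpc : ((pred j' : Fin n) : ℕ) = (j : ℕ) + m := by
          simp only [hpred]
          omega
        obtain ⟨k, hkD, h1, h2⟩ := ih j (pred j') hpc hc2
        exact ⟨k, hkD, h1, by omega⟩
  -- card bound
  have hinj : ∀ j ∈ D, ∀ j' ∈ D, c j = c j' → j = j' := by
    intro j hj j' hj' hcc
    rcases lt_trichotomy j j' with hlt | heq | hgt
    · exfalso
      rw [hD, Finset.mem_filter] at hj'
      have h1 : c j ≤ c (pred j') := by
        apply hc
        have : (j : ℕ) < (j' : ℕ) := hlt
        show (j : ℕ) ≤ ((pred j' : Fin n) : ℕ)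
        simp only [hpred]
        omega
      have h2 : c (pred j') < c j' := by
        have hle : c (pred j') ≤ c j' := by
          apply hc
          show ((pred j' : Fin n) : ℕ) ≤ (j' : ℕ)
          simp only [hpred]; omega
        exact lt_of_le_of_ne hle (Ne.symm hj'.2.2)
      rw [hcc] at h1
      exact absurd h2 (not_lt.mpr h1)
    · exact heq
    · exfalso
      rw [hD, Finset.mem_filter] at hj
      have h1 : c j' ≤ c (pred j) := by
        apply hc
        show (j' : ℕ) ≤ ((pred j : Fin n) : ℕ)
        simp only [hpred]
        have : (j' : ℕ) < (j : ℕ) := hgt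
        omega
      have h2 : c (pred j) < c j := by
        have hle : c (pred j) ≤ c j := by
          apply hc
          show ((pred j : Fin n) : ℕ) ≤ (j : ℕ)
          simp only [hpred]; omega
        exact lt_of_le_of_ne hle (Ne.symm hj.2.2)
      rw [hcc] at h2
      exact absurd h2 (not_lt.mpr h1)
  have hmaps : ∀ j ∈ D, c j ∈ Finset.univ.filter (fun s : Fin 6 => 0 < (s : ℕ)) := by
    intro j hj
    rw [hD, Finset.mem_filter] at hj
    rw [Finset.mem_filter]
    refine ⟨Finset.mem_univ _, ?_⟩
    have hle : c (pred j) ≤ c j := by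
      apply hc
      show ((pred j : Fin n) : ℕ) ≤ (j : ℕ)
      simp only [hpred]; omega
    have : c (pred j) < c j := lt_of_le_of_ne hle (Ne.symm hj.2.2)
    omega
  have hcard6 : (Finset.univ.filter (fun s : Fin 6 => 0 < (s : ℕ))).card = 5 := by decide
  have hD5 : D.card ≤ 5 := by
    rw [← hcard6]
    exact Finset.card_le_card_of_injOn c hmaps (fun j hj j' hj' => hinj j hj j' hj')
  -- positive coordinates
  set Tpos : Finset (Fin n) := Finset.univ.filter (fun j : Fin n => 0 < (j : ℕ)) with hTpos
  have hTposcard : Tpos.card = n - 1 := by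
    have heq2 : Tpos = Finset.univ.erase ⟨0, hn0⟩ := by
      ext j
      simp [hTpos, Fin.ext_iff]
      omega
    rw [heq2, Finset.card_erase_of_mem (Finset.mem_univ _), Finset.card_univ, Fintype.card_fin]
  have hDsub : D ⊆ Tpos := by
    intro j hj
    rw [hD, Finset.mem_filter] at hj
    rw [hTpos, Finset.mem_filter]
    exact ⟨Finset.mem_univ _, hj.2.1⟩
  obtain ⟨T, hDT, hTsub, hT5⟩ :=
    Finset.exists_subsuperset_card_eq hDsub hD5 (by omega)
  set emb := T.orderEmbOfFin hT5 with hemb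
  set c' : Fin n → Fin 6 := fun j =>
    ⟨(T.filter (· ≤ j)).card, by
      have h1 : (T.filter (· ≤ j)).card ≤ T.card := Finset.card_le_card (Finset.filter_subset _ _)
      omega⟩ with hc'
  have hc'mono : Monotone c' := by
    intro j j' hjj'
    show ((T.filter (· ≤ j)).card : ℕ) ≤ (T.filter (· ≤ j')).card
    apply Finset.card_le_card
    intro t ht
    rw [Finset.mem_filter] at ht ⊢
    exact ⟨ht.1, le_trans ht.2 hjj'⟩
  have hfeq : ∀ j j' : Fin n, j ≤ j' → c' j = c' j' → c j = c j' := by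
    intro j j' hle hcc
    by_contra hne
    obtain ⟨k, hkD, h1, h2⟩ := key ((j' : ℕ) - (j : ℕ)) j j' (by omega) hne
    have hkT : k ∈ T := hDT hkD
    have hsub2 : T.filter (· ≤ j) ⊆ T.filter (· ≤ j') := by
      intro t ht
      rw [Finset.mem_filter] at ht ⊢
      exact ⟨ht.1, le_trans ht.2 hle⟩
    have hcards : (T.filter (· ≤ j')).card ≤ (T.filter (· ≤ j)).card := by
      have := congrArg Fin.val hcc
      simp only [hc'] at this
      omega
    have heqsets := Finset.eq_of_subset_of_card_le hsub2 hcards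
    have hk1 : k ∈ T.filter (· ≤ j') := by
      rw [Finset.mem_filter]
      exact ⟨hkT, by exact_mod_cast h2⟩
    rw [← heqsets, Finset.mem_filter] at hk1
    have : (k : ℕ) ≤ (j : ℕ) := hk1.2
    omega
  set ε' : Fin 6 → ℝ := fun s => if h : ∃ j, c' j = s then ε (c h.choose) else 1 with hε'
  refine ⟨c', ε', hc'mono, ?_, ?_, ?_⟩
  · intro s
    simp only [hε']
    split_ifs with h
    · exact hε _
    · left; rfl
  · intro j
    have hex : ∃ j', c' j' = c' j := ⟨j, rfl⟩
    have hspec : c' hex.choose = c' j := hex.choose_spec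
    have hcj : c hex.choose = c j := by
      rcases le_total hex.choose j with h | h
      · exact hfeq _ _ h hspec
      · exact (hfeq _ _ h hspec.symm).symm
    simp only [hε', dif_pos hex, hcj]
    exact hcoh j
  · intro s
    rcases Nat.eq_zero_or_pos (s : ℕ) with h0 | hpos
    · refine ⟨⟨0, hn0⟩, ?_⟩
      have : T.filter (· ≤ (⟨0, hn0⟩ : Fin n)) = ∅ := by
        rw [Finset.eq_empty_iff_forall_notMem]
        intro t ht
        rw [Finset.mem_filter] at ht
        have h1 : 0 < (t : ℕ) := by
          have := hTsub ht.1
          rw [hTpos, Finset.mem_filter] at this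
          exact this.2
        have h2 : (t : ℕ) ≤ 0 := ht.2
        omega
      apply Fin.ext
      simp only [hc', this, Finset.card_empty]
      omega
    · have hs5 : (s : ℕ) - 1 < 5 := by omega
      set k : Fin 5 := ⟨(s : ℕ) - 1, hs5⟩ with hk
      refine ⟨emb k, ?_⟩
      have hset : T.filter (· ≤ emb k) = (Finset.Iic k).image (fun i => emb i) := by
        ext t
        rw [Finset.mem_filter, Finset.mem_image]
        constructor
        · intro ⟨htT, htle⟩
          have : t ∈ Set.range emb := by
            rw [hemb, Finset.range_orderEmbOfFin]
            exact htT
          obtain ⟨i, hi⟩ := this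
          refine ⟨i, ?_, hi⟩
          rw [Finset.mem_Iic]
          rw [← hi] at htle
          exact emb.le_iff_le.mp htle
        · intro ⟨i, hi, hit⟩
          rw [Finset.mem_Iic] at hi
          constructor
          · rw [← hit, hemb]
            exact Finset.orderEmbOfFin_mem _ _ _
          · rw [← hit]
            exact emb.le_iff_le.mpr hi
      apply Fin.ext
      simp only [hc', hset]
      rw [Finset.card_image_of_injective _ emb.injective, Fin.card_Iic]
      simp only [hk]
      omega



/-- no 7-term sign alternation -/
def NoAlt7 {n : ℕ} (u : Fin n → ℝ) : Prop :=
  ¬∃ j0 j1 j2 j3 j4 j5 j6 : Fin n,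
    (j0 < j1 ∧ j1 < j2 ∧ j2 < j3 ∧ j3 < j4 ∧ j4 < j5 ∧ j5 < j6) ∧
    (u j0 * u j1 < 0 ∧ u j1 * u j2 < 0 ∧ u j2 * u j3 < 0 ∧
     u j3 * u j4 < 0 ∧ u j4 * u j5 < 0 ∧ u j5 * u j6 < 0)

open Classical in
noncomputable def nxt {n : ℕ} (P : Fin n → Prop) (m : ℕ) : ℕ :=
  if h : (Finset.univ.filter (fun j : Fin n => m ≤ (j : ℕ) ∧ P j)).Nonempty then
    (((Finset.univ.filter (fun j : Fin n => m ≤ (j : ℕ) ∧ P j)).min' h : Fin n) : ℕ)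
  else n

theorem nxt_le_n {n : ℕ} (P : Fin n → Prop) (m : ℕ) : nxt P m ≤ n := by
  classical
  rw [nxt]
  split_ifs with h
  · exact le_of_lt (Fin.is_lt _)
  · exact le_refl n

theorem nxt_min {n : ℕ} (P : Fin n → Prop) (m : ℕ) (j : Fin n) (hm : m ≤ (j : ℕ))
    (hP : P j) : nxt P m ≤ (j : ℕ) := by
  classical
  rw [nxt]
  have hj : j ∈ Finset.univ.filter (fun j : Fin n => m ≤ (j : ℕ) ∧ P j) := by
    simp [hm, hP]
  rw [dif_pos ⟨j, hj⟩]
  exact Finset.min'_le _ _ hj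

theorem nxt_spec {n : ℕ} (P : Fin n → Prop) (m : ℕ) (h : nxt P m < n) :
    ∃ j : Fin n, (j : ℕ) = nxt P m ∧ m ≤ (j : ℕ) ∧ P j := by
  classical
  rw [nxt] at h ⊢
  split_ifs at h ⊢ with hne
  · set j := (Finset.univ.filter (fun j : Fin n => m ≤ (j : ℕ) ∧ P j)).min' hne with hj
    have := Finset.min'_mem _ hne
    rw [Finset.mem_filter] at this
    exact ⟨j, rfl, this.2.1, this.2.2⟩
  · omega

theorem nxt_ge {n : ℕ} (P : Fin n → Prop) (m : ℕ) (h : nxt P m < n) : m ≤ nxt P m := by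
  obtain ⟨j, hj, hm, _⟩ := nxt_spec P m h
  omega

theorem cover_of_no_six {n : ℕ} {u : Fin n → ℝ}
    (H : ¬∃ j0 j1 j2 j3 j4 j5 : Fin n,
      (j0 < j1 ∧ j1 < j2 ∧ j2 < j3 ∧ j3 < j4 ∧ j4 < j5) ∧
      (u j0 < 0 ∧ 0 < u j1 ∧ u j2 < 0 ∧ 0 < u j3 ∧ u j4 < 0 ∧ 0 < u j5)) : Cover u := by
  classical
  set Pn : Fin n → Prop := fun j => u j < 0 with hPn
  set Pp : Fin n → Prop := fun j => 0 < u j with hPp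
  set b1 := nxt Pn 0 with hb1
  set b2 := nxt Pp (b1 + 1) with hb2
  set b3 := nxt Pn (b2 + 1) with hb3
  set b4 := nxt Pp (b3 + 1) with hb4
  set b5 := nxt Pn (b4 + 1) with hb5
  have hb1n : b1 ≤ n := nxt_le_n _ _
  have hb2n : b2 ≤ n := nxt_le_n _ _
  have hb3n : b3 ≤ n := nxt_le_n _ _
  have hb4n : b4 ≤ n := nxt_le_n _ _
  have hb5n : b5 ≤ n := nxt_le_n _ _
  have h12 : b2 < n → b1 + 1 ≤ b2 := fun h => nxt_ge _ _ h
  have h23 : b3 < n → b2 + 1 ≤ b3 := fun h => nxt_ge _ _ h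
  have h34 : b4 < n → b3 + 1 ≤ b4 := fun h => nxt_ge _ _ h
  have h45 : b5 < n → b4 + 1 ≤ b5 := fun h => nxt_ge _ _ h
  have s12 : b1 ≤ b2 := by
    rcases lt_or_ge b2 n with h | h
    · have := h12 h; omega
    · omega
  have s23 : b2 ≤ b3 := by
    rcases lt_or_ge b3 n with h | h
    · have := h23 h; omega
    · omega
  have s34 : b3 ≤ b4 := by
    rcases lt_or_ge b4 n with h | h
    · have := h34 h; omega
    · omega
  have s45 : b4 ≤ b5 := by
    rcases lt_or_ge b5 n with h | h
    · have := h45 h; omega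
    · omega
  have reg0 : ∀ j : Fin n, (j : ℕ) < b1 → 0 ≤ u j := by
    intro j hj
    by_contra hlt
    push_neg at hlt
    have := nxt_min Pn 0 j (Nat.zero_le _) hlt
    omega
  have reg1 : ∀ j : Fin n, b1 ≤ (j : ℕ) → (j : ℕ) < b2 → u j ≤ 0 := by
    intro j hj1 hj2
    by_contra hlt
    push_neg at hlt
    rcases Nat.lt_or_ge (b1 : ℕ) (j : ℕ) with h | h
    · have := nxt_min Pp (b1 + 1) j (by omega) hlt
      omega
    · have hlt2 : b1 < n := by omega
      obtain ⟨j', hj', _, hPj'⟩ := nxt_spec Pn 0 hlt2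
      have heq : j' = j := Fin.ext (by omega)
      rw [heq] at hPj'
      simp only [hPn] at hPj'
      linarith
  have reg2 : ∀ j : Fin n, b2 ≤ (j : ℕ) → (j : ℕ) < b3 → 0 ≤ u j := by
    intro j hj1 hj2
    by_contra hlt
    push_neg at hlt
    rcases Nat.lt_or_ge (b2 : ℕ) (j : ℕ) with h | h
    · have := nxt_min Pn (b2 + 1) j (by omega) hlt
      omega
    · have hlt2 : b2 < n := by omega
      obtain ⟨j', hj', _, hPj'⟩ := nxt_spec Pp (b1 + 1) hlt2
      have heq : j' = j := Fin.ext (by omega)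
      rw [heq] at hPj'
      simp only [hPp] at hPj'
      linarith
  have reg3 : ∀ j : Fin n, b3 ≤ (j : ℕ) → (j : ℕ) < b4 → u j ≤ 0 := by
    intro j hj1 hj2
    by_contra hlt
    push_neg at hlt
    rcases Nat.lt_or_ge (b3 : ℕ) (j : ℕ) with h | h
    · have := nxt_min Pp (b3 + 1) j (by omega) hlt
      omega
    · have hlt2 : b3 < n := by omega
      obtain ⟨j', hj', _, hPj'⟩ := nxt_spec Pn (b2 + 1) hlt2
      have heq : j' = j := Fin.ext (by omega)
      rw [heq] at hPj'
      simp only [hPn] at hPj'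
      linarith
  have reg4 : ∀ j : Fin n, b4 ≤ (j : ℕ) → (j : ℕ) < b5 → 0 ≤ u j := by
    intro j hj1 hj2
    by_contra hlt
    push_neg at hlt
    rcases Nat.lt_or_ge (b4 : ℕ) (j : ℕ) with h | h
    · have := nxt_min Pn (b4 + 1) j (by omega) hlt
      omega
    · have hlt2 : b4 < n := by omega
      obtain ⟨j', hj', _, hPj'⟩ := nxt_spec Pp (b3 + 1) hlt2
      have heq : j' = j := Fin.ext (by omega)
      rw [heq] at hPj'
      simp only [hPp] at hPj'
      linarith
  have reg5 : ∀ j : Fin n, b5 ≤ (j : ℕ) → u j ≤ 0 := by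
    intro j hj1
    by_contra hlt
    push_neg at hlt
    have hb5lt : b5 < n := by
      have := j.2; omega
    have hb4lt : b4 < n := by omega
    have hb3lt : b3 < n := by omega
    have hb2lt : b2 < n := by omega
    have hb1lt : b1 < n := by omega
    obtain ⟨w1, hw1, _, hP1⟩ := nxt_spec Pn 0 hb1lt
    obtain ⟨w2, hw2, _, hP2⟩ := nxt_spec Pp (b1 + 1) hb2lt
    obtain ⟨w3, hw3, _, hP3⟩ := nxt_spec Pn (b2 + 1) hb3lt
    obtain ⟨w4, hw4, _, hP4⟩ := nxt_spec Pp (b3 + 1) hb4lt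
    obtain ⟨w5, hw5, _, hP5⟩ := nxt_spec Pn (b4 + 1) hb5lt
    simp only [hPn] at hP1 hP3 hP5
    simp only [hPp] at hP2 hP4
    have hne : b5 ≠ (j : ℕ) := by
      intro hh
      have heq : w5 = j := Fin.ext (by omega)
      rw [heq] at hP5
      linarith
    refine H ⟨w1, w2, w3, w4, w5, j, ⟨?_, ?_, ?_, ?_, ?_⟩, hP1, hP2, hP3, hP4, hP5, hlt⟩
    · show (w1 : ℕ) < (w2 : ℕ); omega
    · show (w2 : ℕ) < (w3 : ℕ); omega
    · show (w3 : ℕ) < (w4 : ℕ); omega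
    · show (w4 : ℕ) < (w5 : ℕ); omega
    · show (w5 : ℕ) < (j : ℕ); omega
  set ind : ℕ → Fin n → ℕ := fun t j => if t ≤ (j : ℕ) then 1 else 0 with hind
  have hindmono : ∀ t, ∀ j j' : Fin n, j ≤ j' → ind t j ≤ ind t j' := by
    intro t j j' hjj'
    simp only [hind]
    have : (j : ℕ) ≤ (j' : ℕ) := hjj'
    split_ifs <;> omega
  have hindlt : ∀ j, ind b1 j + ind b2 j + ind b3 j + ind b4 j + ind b5 j < 6 := by
    intro j
    simp only [hind]
    split_ifs <;> omega
  set c : Fin n → Fin 6 := fun j =>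
    ⟨ind b1 j + ind b2 j + ind b3 j + ind b4 j + ind b5 j, hindlt j⟩ with hcdef
  have hcmono : Monotone c := by
    intro j j' hjj'
    simp only [hcdef, Fin.mk_le_mk]
    have h1 := hindmono b1 j j' hjj'
    have h2 := hindmono b2 j j' hjj'
    have h3 := hindmono b3 j j' hjj'
    have h4 := hindmono b4 j j' hjj'
    have h5 := hindmono b5 j j' hjj'
    omega
  refine ⟨c, fun s : Fin 6 => if (s : ℕ) % 2 = 0 then (1:ℝ) else -1, hcmono, ?_, ?_⟩
  · intro s
    by_cases h : (s : ℕ) % 2 = 0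
    · left; simp [h]
    · right; simp [h]
  · intro j
    rcases Nat.lt_or_ge (j : ℕ) b1 with hr | hr1
    · have hcj : c j = ⟨0, by omega⟩ := by
        apply Fin.ext
        show ind b1 j + ind b2 j + ind b3 j + ind b4 j + ind b5 j = 0
        simp only [hind]
        split_ifs <;> omega
      rw [hcj]
      show (0:ℝ) ≤ (if (0 : ℕ) % 2 = 0 then (1:ℝ) else -1) * u j
      norm_num
      exact reg0 j hr
    · rcases Nat.lt_or_ge (j : ℕ) b2 with hr | hr2
      · have hcj : c j = ⟨1, by omega⟩ := by
          apply Fin.ext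
          show ind b1 j + ind b2 j + ind b3 j + ind b4 j + ind b5 j = 1
          simp only [hind]
          split_ifs <;> omega
        rw [hcj]
        have h0 := reg1 j hr1 hr
        show (0:ℝ) ≤ (if (1 : ℕ) % 2 = 0 then (1:ℝ) else -1) * u j
        norm_num
        linarith
      · rcases Nat.lt_or_ge (j : ℕ) b3 with hr | hr3
        · have hcj : c j = ⟨2, by omega⟩ := by
            apply Fin.ext
            show ind b1 j + ind b2 j + ind b3 j + ind b4 j + ind b5 j = 2
            simp only [hind]
            split_ifs <;> omega
          rw [hcj]
          show (0:ℝ) ≤ (if (2 : ℕ) % 2 = 0 then (1:ℝ) else -1) * u j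
          norm_num
          exact reg2 j hr2 hr
        · rcases Nat.lt_or_ge (j : ℕ) b4 with hr | hr4
          · have hcj : c j = ⟨3, by omega⟩ := by
              apply Fin.ext
              show ind b1 j + ind b2 j + ind b3 j + ind b4 j + ind b5 j = 3
              simp only [hind]
              split_ifs <;> omega
            rw [hcj]
            have h0 := reg3 j hr3 hr
            show (0:ℝ) ≤ (if (3 : ℕ) % 2 = 0 then (1:ℝ) else -1) * u j
            norm_num
            linarith
          · rcases Nat.lt_or_ge (j : ℕ) b5 with hr | hr5
            · have hcj : c j = ⟨4, by omega⟩ := by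
                apply Fin.ext
                show ind b1 j + ind b2 j + ind b3 j + ind b4 j + ind b5 j = 4
                simp only [hind]
                split_ifs <;> omega
              rw [hcj]
              show (0:ℝ) ≤ (if (4 : ℕ) % 2 = 0 then (1:ℝ) else -1) * u j
              norm_num
              exact reg4 j hr4 hr
            · have hcj : c j = ⟨5, by omega⟩ := by
                apply Fin.ext
                show ind b1 j + ind b2 j + ind b3 j + ind b4 j + ind b5 j = 5
                simp only [hind]
                split_ifs <;> omega
              rw [hcj]
              have h0 := reg5 j hr5
              show (0:ℝ) ≤ (if (5 : ℕ) % 2 = 0 then (1:ℝ) else -1) * u j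
              norm_num
              linarith

theorem cover_of_noAlt7 {n : ℕ} {u : Fin n → ℝ} (h7 : NoAlt7 u) : Cover u := by
  classical
  by_cases hex : ∃ j0 j1 j2 j3 j4 j5 : Fin n,
      (j0 < j1 ∧ j1 < j2 ∧ j2 < j3 ∧ j3 < j4 ∧ j4 < j5) ∧
      (u j0 < 0 ∧ 0 < u j1 ∧ u j2 < 0 ∧ 0 < u j3 ∧ u j4 < 0 ∧ 0 < u j5)
  · obtain ⟨a0, a1, a2, a3, a4, a5, ⟨o1, o2, o3, o4, o5⟩, sA0, sA1, sA2, sA3, sA4, sA5⟩ := hex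
    have Hneg : ¬∃ j0 j1 j2 j3 j4 j5 : Fin n,
        (j0 < j1 ∧ j1 < j2 ∧ j2 < j3 ∧ j3 < j4 ∧ j4 < j5) ∧
        ((fun j => -u j) j0 < 0 ∧ 0 < (fun j => -u j) j1 ∧ (fun j => -u j) j2 < 0 ∧
         0 < (fun j => -u j) j3 ∧ (fun j => -u j) j4 < 0 ∧ 0 < (fun j => -u j) j5) := by
      rintro ⟨b0, b1, b2, b3, b4, b5, ⟨p1, p2, p3, p4, p5⟩, sB0, sB1, sB2, sB3, sB4, sB5⟩
      have hB0 : 0 < u b0 := by have h : -u b0 < 0 := sB0; linarith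
      have hB1 : u b1 < 0 := by have h : (0:ℝ) < -u b1 := sB1; linarith
      have hB2 : 0 < u b2 := by have h : -u b2 < 0 := sB2; linarith
      have hB3 : u b3 < 0 := by have h : (0:ℝ) < -u b3 := sB3; linarith
      have hB4 : 0 < u b4 := by have h : -u b4 < 0 := sB4; linarith
      have hB5 : u b5 < 0 := by have h : (0:ℝ) < -u b5 := sB5; linarith
      rcases lt_trichotomy b0 a0 with hlt | heq | hgt
      · exact h7 ⟨b0, a0, a1, a2, a3, a4, a5, ⟨hlt, o1, o2, o3, o4, o5⟩,
          mul_neg_of_pos_of_neg hB0 sA0, mul_neg_of_neg_of_pos sA0 sA1,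
          mul_neg_of_pos_of_neg sA1 sA2, mul_neg_of_neg_of_pos sA2 sA3,
          mul_neg_of_pos_of_neg sA3 sA4, mul_neg_of_neg_of_pos sA4 sA5⟩
      · rw [heq] at hB0; linarith
      · exact h7 ⟨a0, b0, b1, b2, b3, b4, b5, ⟨hgt, p1, p2, p3, p4, p5⟩,
          mul_neg_of_neg_of_pos sA0 hB0, mul_neg_of_pos_of_neg hB0 hB1,
          mul_neg_of_neg_of_pos hB1 hB2, mul_neg_of_pos_of_neg hB2 hB3,
          mul_neg_of_neg_of_pos hB3 hB4, mul_neg_of_pos_of_neg hB4 hB5⟩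
    obtain ⟨c, ε, hcm, hεs, hcoh⟩ := cover_of_no_six Hneg
    refine ⟨c, fun s => -ε s, hcm, ?_, ?_⟩
    · intro s
      rcases hεs s with h | h
      · right; simp [h]
      · left; simp [h]
    · intro j
      have h2 : 0 ≤ ε (c j) * (-u j) := hcoh j
      show 0 ≤ -ε (c j) * u j
      nlinarith [h2]
  · exact cover_of_no_six hex


set_option maxHeartbeats 1600000

noncomputable def m2 {n : ℕ} (A : Matrix (Fin 2) (Fin n) ℝ) (j l : Fin n) : ℝ :=
  A 0 j * A 1 l - A 0 l * A 1 j

theorem tnn_no_alt3 {n : ℕ} {V : Submodule ℝ (Fin n → ℝ)} (hV : IsTNNSubspace 2 n V)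
    {y : Fin n → ℝ} (hy : y ∈ V) :
    ¬∃ j1 j2 j3 : Fin n, (j1 < j2 ∧ j2 < j3) ∧ y j1 * y j2 < 0 ∧ y j2 * y j3 < 0 := by
  classical
  rintro ⟨j1, j2, j3, ⟨h12, h23⟩, p12, p23⟩
  obtain ⟨A, hind, hspan, hmin⟩ := hV
  rw [← hspan, Submodule.mem_span_range_iff_exists_fun] at hy
  obtain ⟨c, hc⟩ := hy
  have yj : ∀ j, y j = c 0 * A 0 j + c 1 * A 1 j := by
    intro j
    have h := congr_fun hc j
    rw [Fin.sum_univ_two] at h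
    simpa using h.symm
  have hm : ∀ j l : Fin n, j < l → 0 ≤ m2 A j l := by
    intro j l hjl
    have hf : StrictMono ![j, l] := by
      intro a b hab
      fin_cases a <;> fin_cases b <;> simp_all
    have h := hmin ![j, l] hf
    rw [Matrix.det_fin_two] at h
    simpa [m2, Matrix.submatrix_apply] using h
  have hy1 : y j1 ≠ 0 := by intro h; rw [h] at p12; simp at p12
  have hy2 : y j2 ≠ 0 := by intro h; rw [h] at p12; simp at p12
  have hy3 : y j3 ≠ 0 := by intro h; rw [h] at p23; simp at p23
  have key : y j1 * m2 A j2 j3 - y j2 * m2 A j1 j3 + y j3 * m2 A j1 j2 = 0 := by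
    simp only [yj, m2]
    ring
  have hm12 := hm j1 j2 h12
  have hm13 := hm j1 j3 (lt_trans h12 h23)
  have hm23 := hm j2 j3 h23
  have hsq : 0 < y j2 * y j2 := by
    rcases lt_or_gt_of_ne hy2 with h | h <;> nlinarith
  have hy13 : 0 < y j1 * y j3 := by
    nlinarith [mul_pos_of_neg_of_neg p12 p23, hsq]
  have key2 : (y j1 * y j2) * m2 A j2 j3 - (y j2 * y j2) * m2 A j1 j3 +
      (y j2 * y j3) * m2 A j1 j2 = 0 := by
    have h := congrArg (fun t => y j2 * t) key
    simp only [mul_zero] at h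
    rw [← h]
    ring
  have t1 : y j1 * y j2 * m2 A j2 j3 ≤ 0 := by nlinarith [p12, hm23]
  have t3 : y j2 * y j3 * m2 A j1 j2 ≤ 0 := by nlinarith [p23, hm12]
  have t2 : 0 ≤ y j2 * y j2 * m2 A j1 j3 := mul_nonneg (le_of_lt hsq) hm13
  have hz13 : m2 A j1 j3 = 0 := by
    have h0 : y j2 * y j2 * m2 A j1 j3 = 0 := by linarith
    rcases mul_eq_zero.mp h0 with h' | h'
    · exact absurd h' (ne_of_gt hsq)
    · exact h'
  have hz23 : m2 A j2 j3 = 0 := by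
    have h0 : y j1 * y j2 * m2 A j2 j3 = 0 := by
      rw [hz13] at key2
      simp only [mul_zero, sub_zero] at key2
      linarith
    rcases mul_eq_zero.mp h0 with h' | h'
    · exact absurd h' (ne_of_lt p12)
    · exact h'
  have hz12 : m2 A j1 j2 = 0 := by
    have h0 : y j2 * y j3 * m2 A j1 j2 = 0 := by
      rw [hz13, hz23] at key2
      simp only [mul_zero, sub_zero, zero_add] at key2
      linarith
    rcases mul_eq_zero.mp h0 with h' | h'
    · exact absurd h' (ne_of_lt p23)
    · exact h'
  have hcol1 : A 0 j1 ≠ 0 ∨ A 1 j1 ≠ 0 := by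
    by_contra h
    push_neg at h
    apply hy1
    rw [yj j1, h.1, h.2]
    ring
  have prop_of_zero : ∀ q : Fin n, m2 A j1 q = 0 →
      ∃ lam : ℝ, A 0 q = lam * A 0 j1 ∧ A 1 q = lam * A 1 j1 := by
    intro q hq
    simp only [m2] at hq
    rcases hcol1 with h | h
    · refine ⟨A 0 q / A 0 j1, by field_simp, ?_⟩
      field_simp
      nlinarith [hq]
    · refine ⟨A 1 q / A 1 j1, ?_, by field_simp⟩
      field_simp
      nlinarith [hq]
  obtain ⟨lam, hlam0, hlam1⟩ := prop_of_zero j2 hz12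
  obtain ⟨mu, hmu0, hmu1⟩ := prop_of_zero j3 hz13
  have ylam : y j2 = lam * y j1 := by rw [yj j2, yj j1, hlam0, hlam1]; ring
  have ymu : y j3 = mu * y j1 := by rw [yj j3, yj j1, hmu0, hmu1]; ring
  have hsq1 : 0 < y j1 * y j1 := by
    rcases lt_or_gt_of_ne hy1 with h | h <;> nlinarith
  have hlamneg : lam < 0 := by
    by_contra hge
    push_neg at hge
    rw [ylam] at p12
    nlinarith [hsq1]
  have hmupos : 0 < mu := by
    by_contra hle
    push_neg at hle
    rw [ymu] at hy13
    nlinarith [hsq1]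
  have mrel2 : ∀ l, m2 A j2 l = lam * m2 A j1 l := by
    intro l; simp only [m2, hlam0, hlam1]; ring
  have mrel3 : ∀ l, m2 A j3 l = mu * m2 A j1 l := by
    intro l; simp only [m2, hmu0, hmu1]; ring
  have anti : ∀ p q : Fin n, m2 A p q = -m2 A q p := by
    intro p q; simp only [m2]; ring
  have main : ∀ l : Fin n, m2 A j1 l = 0 := by
    intro l
    rcases lt_trichotomy l j1 with h | h | h
    · have h1 : 0 ≤ m2 A l j1 := hm l j1 h
      have h2 : 0 ≤ m2 A l j2 := hm l j2 (lt_trans h h12)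
      have h3 : m2 A l j2 = lam * m2 A l j1 := by
        rw [anti l j2, mrel2 l, anti j1 l]
        ring
      have h6 : m2 A l j1 ≤ 0 := by
        by_contra hpos
        push_neg at hpos
        have h7 := mul_neg_of_neg_of_pos hlamneg hpos
        rw [← h3] at h7
        linarith
      have h8 : m2 A l j1 = 0 := le_antisymm h6 h1
      rw [anti j1 l, h8, neg_zero]
    · rw [← h]
      simp [m2]
    · rcases lt_trichotomy l j2 with h' | h' | h'
      · have h1 : 0 ≤ m2 A j1 l := hm j1 l h
        have h2 : 0 ≤ m2 A l j3 := hm l j3 (lt_trans h' h23)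
        have h3 : m2 A l j3 = -(mu * m2 A j1 l) := by
          rw [anti l j3, mrel3 l]
        have h6 : m2 A j1 l ≤ 0 := by
          by_contra hpos
          push_neg at hpos
          have h7 := mul_pos hmupos hpos
          rw [h3] at h2
          linarith
        exact le_antisymm h6 h1
      · rw [h']; exact hz12
      · have h1 : 0 ≤ m2 A j1 l := hm j1 l h
        have h2 : 0 ≤ m2 A j2 l := by
          rcases lt_trichotomy l j3 with h'' | h'' | h''
          · exact hm j2 l h'
          · exact hm j2 l h'
          · exact hm j2 l h'
        have h3 : m2 A j2 l = lam * m2 A j1 l := mrel2 l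
        have h6 : m2 A j1 l ≤ 0 := by
          by_contra hpos
          push_neg at hpos
          have h7 := mul_neg_of_neg_of_pos hlamneg hpos
          rw [← h3] at h7
          linarith
        exact le_antisymm h6 h1
  rw [Fintype.linearIndependent_iff] at hind
  have hzero : ∑ i, (![A 1 j1, -(A 0 j1)] : Fin 2 → ℝ) i • A i = 0 := by
    funext l
    have hml := main l
    simp only [m2] at hml
    rw [Fin.sum_univ_two]
    simp only [Matrix.cons_val_zero, Matrix.cons_val_one, Matrix.head_cons,
      Pi.add_apply, Pi.smul_apply, smul_eq_mul, Pi.zero_apply, neg_mul, neg_smul,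
      Pi.neg_apply]
    linear_combination -hml
  have h0 := hind ![A 1 j1, -(A 0 j1)] hzero 0
  have h1 := hind ![A 1 j1, -(A 0 j1)] hzero 1
  simp at h0 h1
  rcases hcol1 with h | h
  · exact h h1
  · exact h h0

/-- separation into PN or NP form -/
theorem sep_of_no_alt3 {n : ℕ} {y : Fin n → ℝ}
    (h : ¬∃ j1 j2 j3 : Fin n, (j1 < j2 ∧ j2 < j3) ∧ y j1 * y j2 < 0 ∧ y j2 * y j3 < 0) :
    (∃ σ : ℕ, ∀ j : Fin n, ((j : ℕ) < σ → 0 ≤ y j) ∧ (σ ≤ (j : ℕ) → y j ≤ 0)) ∨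
    (∃ σ : ℕ, ∀ j : Fin n, ((j : ℕ) < σ → y j ≤ 0) ∧ (σ ≤ (j : ℕ) → 0 ≤ y j)) := by
  classical
  by_cases hN : (Finset.univ.filter (fun j : Fin n => y j < 0)).Nonempty
  · obtain ⟨σn, hσnNeg, hσnmin⟩ : ∃ s : Fin n, y s < 0 ∧ ∀ j : Fin n, y j < 0 → s ≤ j := by
      refine ⟨(Finset.univ.filter (fun j : Fin n => y j < 0)).min' hN, ?_, ?_⟩
      · have h2 := Finset.min'_mem _ hN
        simp only [Finset.mem_filter] at h2
        exact h2.2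
      · intro j hj
        exact Finset.min'_le _ _ (by simp [hj])
    by_cases hP : ∃ p : Fin n, 0 < y p ∧ σn < p
    · obtain ⟨p0, hp0pos, hp0gt⟩ := hP
      have hnopos : ∀ q : Fin n, q < σn → ¬(0 < y q) := by
        intro q hq hqpos
        exact h ⟨q, σn, p0, ⟨hq, hp0gt⟩,
          mul_neg_of_pos_of_neg hqpos hσnNeg, mul_neg_of_neg_of_pos hσnNeg hp0pos⟩
      have hPne : (Finset.univ.filter (fun j : Fin n => 0 < y j)).Nonempty :=
        ⟨p0, by simp [hp0pos]⟩
      obtain ⟨σp, hσpPos, hσpmin⟩ : ∃ s : Fin n, 0 < y s ∧ ∀ j : Fin n, 0 < y j → s ≤ j := by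
        refine ⟨(Finset.univ.filter (fun j : Fin n => 0 < y j)).min' hPne, ?_, ?_⟩
        · have h2 := Finset.min'_mem _ hPne
          simp only [Finset.mem_filter] at h2
          exact h2.2
        · intro j hj
          exact Finset.min'_le _ _ (by simp [hj])
      have hnp : σn < σp := by
        rcases lt_trichotomy σp σn with hh | hh | hh
        · exact absurd hσpPos (hnopos σp hh)
        · rw [hh] at hσpPos; linarith
        · exact hh
      right
      refine ⟨(σp : ℕ), fun j => ⟨?_, ?_⟩⟩
      · intro hj
        by_contra hpos
        push_neg at hpos
        have h2 : σp ≤ j := hσpmin j hpos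
        have h3 : (σp : ℕ) ≤ (j : ℕ) := h2
        omega
      · intro hj
        by_contra hneg
        push_neg at hneg
        have hjne : σp ≠ j := by
          intro hh; rw [hh] at hσpPos; linarith
        have hlt : σp < j := by
          have : (σp : ℕ) ≤ (j : ℕ) := hj
          exact lt_of_le_of_ne (by exact_mod_cast this) hjne
        exact h ⟨σn, σp, j, ⟨hnp, hlt⟩,
          mul_neg_of_neg_of_pos hσnNeg hσpPos, mul_neg_of_pos_of_neg hσpPos hneg⟩
    · push_neg at hP
      left
      refine ⟨(σn : ℕ), fun j => ⟨?_, ?_⟩⟩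
      · intro hj
        by_contra hneg
        push_neg at hneg
        have h2 : σn ≤ j := hσnmin j hneg
        have h3 : (σn : ℕ) ≤ (j : ℕ) := h2
        omega
      · intro hj
        by_contra hpos
        push_neg at hpos
        have h2 : j ≤ σn := hP j hpos
        have h3 : (j : ℕ) ≤ (σn : ℕ) := h2
        have hje : j = σn := Fin.ext (by omega)
        rw [hje] at hpos
        linarith
  · left
    refine ⟨n, fun j => ⟨?_, ?_⟩⟩
    · intro _
      by_contra hneg
      push_neg at hneg
      exact hN ⟨j, by simp [hneg]⟩
    · intro hj
      exact absurd j.2 (by omega)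



private theorem sgn1 {a b : ℝ} (h : a * b < 0) (ha : 0 < a) : b < 0 := by nlinarith
private theorem sgn2 {a b : ℝ} (h : a * b < 0) (ha : a < 0) : 0 < b := by nlinarith

/-- Case A: `x` supported on `{a,a+1,p,p+1,L}` with `x_a>0`, `x_{a+1}≥0`, `x_L≤0`,
`y` vanishing on `[0,a]` and sign-separated. -/
theorem refuteA {n a p : ℕ} {x y : Fin n → ℝ}
    (hap : a + 1 < p) (hpL : p + 1 < n - 1)
    (hxsupp : ∀ j : Fin n, (j : ℕ) ≠ a → (j : ℕ) ≠ a + 1 → (j : ℕ) ≠ p → (j : ℕ) ≠ p + 1 →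
      (j : ℕ) ≠ n - 1 → x j = 0)
    (hxa : ∀ j : Fin n, (j : ℕ) = a → 0 < x j)
    (hxa1 : ∀ j : Fin n, (j : ℕ) = a + 1 → 0 ≤ x j)
    (hxL : ∀ j : Fin n, (j : ℕ) = n - 1 → x j ≤ 0)
    (hy0 : ∀ j : Fin n, (j : ℕ) ≤ a → y j = 0)
    (hsep : (∃ σ : ℕ, ∀ j : Fin n, ((j : ℕ) < σ → 0 ≤ y j) ∧ (σ ≤ (j : ℕ) → y j ≤ 0)) ∨
            (∃ σ : ℕ, ∀ j : Fin n, ((j : ℕ) < σ → y j ≤ 0) ∧ (σ ≤ (j : ℕ) → 0 ≤ y j))) :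
    NoAlt7 (fun j => x j - y j) := by
  rintro ⟨j0, j1, j2, j3, j4, j5, j6, ⟨o1, o2, o3, o4, o5, o6⟩, q1, q2, q3, q4, q5, q6⟩
  set u : Fin n → ℝ := fun j => x j - y j with hu
  have hval : ∀ j, u j = x j - y j := fun j => rfl
  have Dneg : ∀ j : Fin n, u j < 0 → x j < 0 ∨ 0 < y j := by
    intro j hj
    by_contra hcon
    push_neg at hcon
    rw [hval] at hj
    linarith [hcon.1, hcon.2]
  have Dpos : ∀ j : Fin n, 0 < u j → 0 < x j ∨ y j < 0 := by
    intro j hj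
    by_contra hcon
    push_neg at hcon
    rw [hval] at hj
    linarith [hcon.1, hcon.2]
  have hyne : ∀ j : Fin n, y j ≠ 0 → a < (j : ℕ) := by
    intro j hj
    by_contra hle
    push_neg at hle
    exact hj (hy0 j hle)
  have xneg : ∀ j : Fin n, x j < 0 →
      ((j : ℕ) = p ∨ (j : ℕ) = p + 1 ∨ (j : ℕ) = n - 1) := by
    intro j hj
    by_cases h1 : (j : ℕ) = a
    · exact absurd (hxa j h1) (by linarith)
    by_cases h2 : (j : ℕ) = a + 1
    · exact absurd (hxa1 j h2) (by linarith)
    by_cases h3 : (j : ℕ) = p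
    · exact Or.inl h3
    by_cases h4 : (j : ℕ) = p + 1
    · exact Or.inr (Or.inl h4)
    by_cases h5 : (j : ℕ) = n - 1
    · exact Or.inr (Or.inr h5)
    · exact absurd (hxsupp j h1 h2 h3 h4 h5) (by intro hh; rw [hh] at hj; exact lt_irrefl 0 hj)
  have xpos : ∀ j : Fin n, 0 < x j →
      ((j : ℕ) = a ∨ (j : ℕ) = a + 1 ∨ (j : ℕ) = p ∨ (j : ℕ) = p + 1 ∨ (j : ℕ) = n - 1) := by
    intro j hj
    by_cases h1 : (j : ℕ) = a
    · exact Or.inl h1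
    by_cases h2 : (j : ℕ) = a + 1
    · exact Or.inr (Or.inl h2)
    by_cases h3 : (j : ℕ) = p
    · exact Or.inr (Or.inr (Or.inl h3))
    by_cases h4 : (j : ℕ) = p + 1
    · exact Or.inr (Or.inr (Or.inr (Or.inl h4)))
    by_cases h5 : (j : ℕ) = n - 1
    · exact Or.inr (Or.inr (Or.inr (Or.inr h5)))
    · exact absurd (hxsupp j h1 h2 h3 h4 h5) (by intro hh; rw [hh] at hj; exact lt_irrefl 0 hj)
  have hb0 : (j0 : ℕ) < n := j0.2
  have hb1 : (j1 : ℕ) < n := j1.2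
  have hb2 : (j2 : ℕ) < n := j2.2
  have hb3 : (j3 : ℕ) < n := j3.2
  have hb4 : (j4 : ℕ) < n := j4.2
  have hb5 : (j5 : ℕ) < n := j5.2
  have hb6 : (j6 : ℕ) < n := j6.2
  have ho1 : (j0 : ℕ) < (j1 : ℕ) := o1
  have ho2 : (j1 : ℕ) < (j2 : ℕ) := o2
  have ho3 : (j2 : ℕ) < (j3 : ℕ) := o3
  have ho4 : (j3 : ℕ) < (j4 : ℕ) := o4
  have ho5 : (j4 : ℕ) < (j5 : ℕ) := o5
  have ho6 : (j5 : ℕ) < (j6 : ℕ) := o6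
  rcases hsep with ⟨σ, hσ⟩ | ⟨σ, hσ⟩
  · -- PN : y ≥ 0 below σ, ≤ 0 from σ on
    have NH : ∀ j : Fin n, u j < 0 →
        ((j : ℕ) = p ∨ (j : ℕ) = p + 1 ∨ (j : ℕ) = n - 1 ∨ (a < (j : ℕ) ∧ (j : ℕ) < σ)) := by
      intro j hj
      rcases Dneg j hj with hx | hy
      · rcases xneg j hx with h | h | h
        · exact Or.inl h
        · exact Or.inr (Or.inl h)
        · exact Or.inr (Or.inr (Or.inl h))
      · refine Or.inr (Or.inr (Or.inr ⟨hyne j (ne_of_gt hy), ?_⟩))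
        by_contra hge
        push_neg at hge
        linarith [(hσ j).2 hge]
    have PH : ∀ j : Fin n, 0 < u j →
        ((j : ℕ) = a ∨ (j : ℕ) = a + 1 ∨ (j : ℕ) = p ∨ (j : ℕ) = p + 1 ∨ (j : ℕ) = n - 1 ∨
          (a < (j : ℕ) ∧ σ ≤ (j : ℕ))) := by
      intro j hj
      rcases Dpos j hj with hx | hy
      · rcases xpos j hx with h | h | h | h | h
        · exact Or.inl h
        · exact Or.inr (Or.inl h)
        · exact Or.inr (Or.inr (Or.inl h))
        · exact Or.inr (Or.inr (Or.inr (Or.inl h)))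
        · exact Or.inr (Or.inr (Or.inr (Or.inr (Or.inl h))))
      · refine Or.inr (Or.inr (Or.inr (Or.inr (Or.inr ⟨hyne j (ne_of_lt hy), ?_⟩))))
        by_contra hlt
        push_neg at hlt
        linarith [(hσ j).1 hlt]
    rcases lt_trichotomy (u j0) 0 with hs0 | hs0 | hs0
    · -- pattern -+-+-+-
      have hs1 : 0 < u j1 := sgn2 q1 hs0
      have hs2 : u j2 < 0 := sgn1 q2 hs1
      have hs3 : 0 < u j3 := sgn2 q3 hs2
      have hs4 : u j4 < 0 := sgn1 q4 hs3
      have hs5 : 0 < u j5 := sgn2 q5 hs4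
      have hs6 : u j6 < 0 := sgn1 q6 hs5
      have f0 := NH j0 hs0
      have f1 := PH j1 hs1
      have f2 := NH j2 hs2
      have f3 := PH j3 hs3
      have f4 := NH j4 hs4
      have f5 := PH j5 hs5
      have f6 := NH j6 hs6
      omega
    · rw [hs0] at q1; simp at q1
    · -- pattern +-+-+-+
      have hs1 : u j1 < 0 := sgn1 q1 hs0
      have hs2 : 0 < u j2 := sgn2 q2 hs1
      have hs3 : u j3 < 0 := sgn1 q3 hs2
      have hs4 : 0 < u j4 := sgn2 q4 hs3
      have hs5 : u j5 < 0 := sgn1 q5 hs4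
      have hs6 : 0 < u j6 := sgn2 q6 hs5
      have f0 := PH j0 hs0
      have f1 := NH j1 hs1
      have f2 := PH j2 hs2
      have f3 := NH j3 hs3
      have f4 := PH j4 hs4
      have f5 := NH j5 hs5
      have f6 := PH j6 hs6
      omega
  · -- NP : y ≤ 0 below σ, ≥ 0 from σ on
    have NH : ∀ j : Fin n, u j < 0 →
        ((j : ℕ) = p ∨ (j : ℕ) = p + 1 ∨ (j : ℕ) = n - 1 ∨ (a < (j : ℕ) ∧ σ ≤ (j : ℕ))) := by
      intro j hj
      rcases Dneg j hj with hx | hy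
      · rcases xneg j hx with h | h | h
        · exact Or.inl h
        · exact Or.inr (Or.inl h)
        · exact Or.inr (Or.inr (Or.inl h))
      · refine Or.inr (Or.inr (Or.inr ⟨hyne j (ne_of_gt hy), ?_⟩))
        by_contra hlt
        push_neg at hlt
        linarith [(hσ j).1 hlt]
    have PH : ∀ j : Fin n, 0 < u j →
        ((j : ℕ) = a ∨ (j : ℕ) = a + 1 ∨ (j : ℕ) = p ∨ (j : ℕ) = p + 1 ∨ (j : ℕ) = n - 1 ∨
          (a < (j : ℕ) ∧ (j : ℕ) < σ)) := by
      intro j hj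
      rcases Dpos j hj with hx | hy
      · rcases xpos j hx with h | h | h | h | h
        · exact Or.inl h
        · exact Or.inr (Or.inl h)
        · exact Or.inr (Or.inr (Or.inl h))
        · exact Or.inr (Or.inr (Or.inr (Or.inl h)))
        · exact Or.inr (Or.inr (Or.inr (Or.inr (Or.inl h))))
      · refine Or.inr (Or.inr (Or.inr (Or.inr (Or.inr ⟨hyne j (ne_of_lt hy), ?_⟩))))
        by_contra hge
        push_neg at hge
        linarith [(hσ j).2 hge]
    rcases lt_trichotomy (u j0) 0 with hs0 | hs0 | hs0
    · have hs1 : 0 < u j1 := sgn2 q1 hs0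
      have hs2 : u j2 < 0 := sgn1 q2 hs1
      have hs3 : 0 < u j3 := sgn2 q3 hs2
      have hs4 : u j4 < 0 := sgn1 q4 hs3
      have hs5 : 0 < u j5 := sgn2 q5 hs4
      have hs6 : u j6 < 0 := sgn1 q6 hs5
      have f0 := NH j0 hs0
      have f1 := PH j1 hs1
      have f2 := NH j2 hs2
      have f3 := PH j3 hs3
      have f4 := NH j4 hs4
      have f5 := PH j5 hs5
      have f6 := NH j6 hs6
      omega
    · rw [hs0] at q1; simp at q1
    · have hs1 : u j1 < 0 := sgn1 q1 hs0
      have hs2 : 0 < u j2 := sgn2 q2 hs1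
      have hs3 : u j3 < 0 := sgn1 q3 hs2
      have hs4 : 0 < u j4 := sgn2 q4 hs3
      have hs5 : u j5 < 0 := sgn1 q5 hs4
      have hs6 : 0 < u j6 := sgn2 q6 hs5
      have f0 := PH j0 hs0
      have f1 := NH j1 hs1
      have f2 := PH j2 hs2
      have f3 := NH j3 hs3
      have f4 := PH j4 hs4
      have f5 := NH j5 hs5
      have f6 := PH j6 hs6
      omega




/-- Case B: `x` supported on `{p,p+1,q,q+1,L}` with `x_p, x_{p+1} ≥ 0` and the tail
`(q, q+1, L)` sign-coherent; `y` vanishes on `[q+1, L)` and is sign-separated. -/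
theorem refuteB {n p q : ℕ} {x y : Fin n → ℝ}
    (hpq : p + 1 < q) (hqL : q + 1 < n - 1)
    (hxsupp : ∀ j : Fin n, (j : ℕ) ≠ p → (j : ℕ) ≠ p + 1 → (j : ℕ) ≠ q → (j : ℕ) ≠ q + 1 →
      (j : ℕ) ≠ n - 1 → x j = 0)
    (hxp : ∀ j : Fin n, (j : ℕ) = p → 0 ≤ x j)
    (hxp1 : ∀ j : Fin n, (j : ℕ) = p + 1 → 0 ≤ x j)
    (htail : (∀ j : Fin n, ((j : ℕ) = q ∨ (j : ℕ) = q + 1 ∨ (j : ℕ) = n - 1) → 0 ≤ x j) ∨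
             (∀ j : Fin n, ((j : ℕ) = q ∨ (j : ℕ) = q + 1 ∨ (j : ℕ) = n - 1) → x j ≤ 0))
    (hy0 : ∀ j : Fin n, q + 1 ≤ (j : ℕ) → (j : ℕ) < n - 1 → y j = 0)
    (hsep : (∃ σ : ℕ, ∀ j : Fin n, ((j : ℕ) < σ → 0 ≤ y j) ∧ (σ ≤ (j : ℕ) → y j ≤ 0)) ∨
            (∃ σ : ℕ, ∀ j : Fin n, ((j : ℕ) < σ → y j ≤ 0) ∧ (σ ≤ (j : ℕ) → 0 ≤ y j))) :
    NoAlt7 (fun j => x j - y j) := by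
  rintro ⟨j0, j1, j2, j3, j4, j5, j6, ⟨o1, o2, o3, o4, o5, o6⟩, q1, q2, q3, q4, q5, q6⟩
  set u : Fin n → ℝ := fun j => x j - y j with hu
  have hval : ∀ j, u j = x j - y j := fun j => rfl
  have Dneg : ∀ j : Fin n, u j < 0 → x j < 0 ∨ 0 < y j := by
    intro j hj
    by_contra hcon
    push_neg at hcon
    rw [hval] at hj
    linarith [hcon.1, hcon.2]
  have Dpos : ∀ j : Fin n, 0 < u j → 0 < x j ∨ y j < 0 := by
    intro j hj
    by_contra hcon
    push_neg at hcon
    rw [hval] at hj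
    linarith [hcon.1, hcon.2]
  have hyne : ∀ j : Fin n, y j ≠ 0 → ¬(q + 1 ≤ (j : ℕ) ∧ (j : ℕ) < n - 1) := by
    intro j hj hcon
    exact hj (hy0 j hcon.1 hcon.2)
  have hb0 : (j0 : ℕ) < n := j0.2
  have hb6 : (j6 : ℕ) < n := j6.2
  have ho1 : (j0 : ℕ) < (j1 : ℕ) := o1
  have ho2 : (j1 : ℕ) < (j2 : ℕ) := o2
  have ho3 : (j2 : ℕ) < (j3 : ℕ) := o3
  have ho4 : (j3 : ℕ) < (j4 : ℕ) := o4
  have ho5 : (j4 : ℕ) < (j5 : ℕ) := o5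
  have ho6 : (j5 : ℕ) < (j6 : ℕ) := o6
  have hb1 : (j1 : ℕ) < n := j1.2
  have hb2 : (j2 : ℕ) < n := j2.2
  have hb3 : (j3 : ℕ) < n := j3.2
  have hb4 : (j4 : ℕ) < n := j4.2
  have hb5 : (j5 : ℕ) < n := j5.2
  -- x sign facts depending on tail case
  rcases htail with htp | htn
  · -- tail nonneg : x ≥ 0 everywhere except nothing (x j < 0 impossible)
    have xneg : ∀ j : Fin n, x j < 0 → False := by
      intro j hj
      by_cases h1 : (j : ℕ) = p
      · exact absurd (hxp j h1) (by linarith)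
      by_cases h2 : (j : ℕ) = p + 1
      · exact absurd (hxp1 j h2) (by linarith)
      by_cases h3 : (j : ℕ) = q
      · exact absurd (htp j (Or.inl h3)) (by linarith)
      by_cases h4 : (j : ℕ) = q + 1
      · exact absurd (htp j (Or.inr (Or.inl h4))) (by linarith)
      by_cases h5 : (j : ℕ) = n - 1
      · exact absurd (htp j (Or.inr (Or.inr h5))) (by linarith)
      · exact absurd (hxsupp j h1 h2 h3 h4 h5) (by intro hh; rw [hh] at hj; exact lt_irrefl 0 hj)
    have xpos : ∀ j : Fin n, 0 < x j →
        ((j : ℕ) = p ∨ (j : ℕ) = p + 1 ∨ (j : ℕ) = q ∨ (j : ℕ) = q + 1 ∨ (j : ℕ) = n - 1) := by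
      intro j hj
      by_cases h1 : (j : ℕ) = p
      · exact Or.inl h1
      by_cases h2 : (j : ℕ) = p + 1
      · exact Or.inr (Or.inl h2)
      by_cases h3 : (j : ℕ) = q
      · exact Or.inr (Or.inr (Or.inl h3))
      by_cases h4 : (j : ℕ) = q + 1
      · exact Or.inr (Or.inr (Or.inr (Or.inl h4)))
      by_cases h5 : (j : ℕ) = n - 1
      · exact Or.inr (Or.inr (Or.inr (Or.inr h5)))
      · exact absurd (hxsupp j h1 h2 h3 h4 h5) (by intro hh; rw [hh] at hj; exact lt_irrefl 0 hj)
    rcases hsep with ⟨σ, hσ⟩ | ⟨σ, hσ⟩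
    · -- PN
      have NH : ∀ j : Fin n, u j < 0 →
          (¬(q + 1 ≤ (j : ℕ) ∧ (j : ℕ) < n - 1) ∧ (j : ℕ) < σ) := by
        intro j hj
        rcases Dneg j hj with hx | hy
        · exact absurd hx (by intro hh; exact xneg j hh)
        · refine ⟨hyne j (ne_of_gt hy), ?_⟩
          by_contra hge
          push_neg at hge
          linarith [(hσ j).2 hge]
      have PH : ∀ j : Fin n, 0 < u j →
          ((j : ℕ) = p ∨ (j : ℕ) = p + 1 ∨ (j : ℕ) = q ∨ (j : ℕ) = q + 1 ∨ (j : ℕ) = n - 1 ∨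
            (¬(q + 1 ≤ (j : ℕ) ∧ (j : ℕ) < n - 1) ∧ σ ≤ (j : ℕ))) := by
        intro j hj
        rcases Dpos j hj with hx | hy
        · rcases xpos j hx with h | h | h | h | h
          · exact Or.inl h
          · exact Or.inr (Or.inl h)
          · exact Or.inr (Or.inr (Or.inl h))
          · exact Or.inr (Or.inr (Or.inr (Or.inl h)))
          · exact Or.inr (Or.inr (Or.inr (Or.inr (Or.inl h))))
        · refine Or.inr (Or.inr (Or.inr (Or.inr (Or.inr ⟨hyne j (ne_of_lt hy), ?_⟩))))
          by_contra hlt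
          push_neg at hlt
          linarith [(hσ j).1 hlt]
      rcases lt_trichotomy (u j0) 0 with hs0 | hs0 | hs0
      · have hs1 : 0 < u j1 := sgn2 q1 hs0
        have hs2 : u j2 < 0 := sgn1 q2 hs1
        have hs3 : 0 < u j3 := sgn2 q3 hs2
        have hs4 : u j4 < 0 := sgn1 q4 hs3
        have hs5 : 0 < u j5 := sgn2 q5 hs4
        have hs6 : u j6 < 0 := sgn1 q6 hs5
        have f0 := NH j0 hs0
        have f1 := PH j1 hs1
        have f2 := NH j2 hs2
        have f3 := PH j3 hs3
        have f4 := NH j4 hs4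
        have f5 := PH j5 hs5
        have f6 := NH j6 hs6
        omega
      · rw [hs0] at q1; simp at q1
      · have hs1 : u j1 < 0 := sgn1 q1 hs0
        have hs2 : 0 < u j2 := sgn2 q2 hs1
        have hs3 : u j3 < 0 := sgn1 q3 hs2
        have hs4 : 0 < u j4 := sgn2 q4 hs3
        have hs5 : u j5 < 0 := sgn1 q5 hs4
        have hs6 : 0 < u j6 := sgn2 q6 hs5
        have f0 := PH j0 hs0
        have f1 := NH j1 hs1
        have f2 := PH j2 hs2
        have f3 := NH j3 hs3
        have f4 := PH j4 hs4
        have f5 := NH j5 hs5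
        have f6 := PH j6 hs6
        omega
    · -- NP
      have NH : ∀ j : Fin n, u j < 0 →
          (¬(q + 1 ≤ (j : ℕ) ∧ (j : ℕ) < n - 1) ∧ σ ≤ (j : ℕ)) := by
        intro j hj
        rcases Dneg j hj with hx | hy
        · exact absurd hx (by intro hh; exact xneg j hh)
        · refine ⟨hyne j (ne_of_gt hy), ?_⟩
          by_contra hlt
          push_neg at hlt
          linarith [(hσ j).1 hlt]
      have PH : ∀ j : Fin n, 0 < u j →
          ((j : ℕ) = p ∨ (j : ℕ) = p + 1 ∨ (j : ℕ) = q ∨ (j : ℕ) = q + 1 ∨ (j : ℕ) = n - 1 ∨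
            (¬(q + 1 ≤ (j : ℕ) ∧ (j : ℕ) < n - 1) ∧ (j : ℕ) < σ)) := by
        intro j hj
        rcases Dpos j hj with hx | hy
        · rcases xpos j hx with h | h | h | h | h
          · exact Or.inl h
          · exact Or.inr (Or.inl h)
          · exact Or.inr (Or.inr (Or.inl h))
          · exact Or.inr (Or.inr (Or.inr (Or.inl h)))
          · exact Or.inr (Or.inr (Or.inr (Or.inr (Or.inl h))))
        · refine Or.inr (Or.inr (Or.inr (Or.inr (Or.inr ⟨hyne j (ne_of_lt hy), ?_⟩))))
          by_contra hge
          push_neg at hge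
          linarith [(hσ j).2 hge]
      rcases lt_trichotomy (u j0) 0 with hs0 | hs0 | hs0
      · have hs1 : 0 < u j1 := sgn2 q1 hs0
        have hs2 : u j2 < 0 := sgn1 q2 hs1
        have hs3 : 0 < u j3 := sgn2 q3 hs2
        have hs4 : u j4 < 0 := sgn1 q4 hs3
        have hs5 : 0 < u j5 := sgn2 q5 hs4
        have hs6 : u j6 < 0 := sgn1 q6 hs5
        have f0 := NH j0 hs0
        have f1 := PH j1 hs1
        have f2 := NH j2 hs2
        have f3 := PH j3 hs3
        have f4 := NH j4 hs4
        have f5 := PH j5 hs5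
        have f6 := NH j6 hs6
        omega
      · rw [hs0] at q1; simp at q1
      · have hs1 : u j1 < 0 := sgn1 q1 hs0
        have hs2 : 0 < u j2 := sgn2 q2 hs1
        have hs3 : u j3 < 0 := sgn1 q3 hs2
        have hs4 : 0 < u j4 := sgn2 q4 hs3
        have hs5 : u j5 < 0 := sgn1 q5 hs4
        have hs6 : 0 < u j6 := sgn2 q6 hs5
        have f0 := PH j0 hs0
        have f1 := NH j1 hs1
        have f2 := PH j2 hs2
        have f3 := NH j3 hs3
        have f4 := PH j4 hs4
        have f5 := NH j5 hs5
        have f6 := PH j6 hs6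
        omega
  · -- tail nonpos
    have xneg : ∀ j : Fin n, x j < 0 →
        ((j : ℕ) = q ∨ (j : ℕ) = q + 1 ∨ (j : ℕ) = n - 1) := by
      intro j hj
      by_cases h1 : (j : ℕ) = p
      · exact absurd (hxp j h1) (by linarith)
      by_cases h2 : (j : ℕ) = p + 1
      · exact absurd (hxp1 j h2) (by linarith)
      by_cases h3 : (j : ℕ) = q
      · exact Or.inl h3
      by_cases h4 : (j : ℕ) = q + 1
      · exact Or.inr (Or.inl h4)
      by_cases h5 : (j : ℕ) = n - 1
      · exact Or.inr (Or.inr h5)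
      · exact absurd (hxsupp j h1 h2 h3 h4 h5) (by intro hh; rw [hh] at hj; exact lt_irrefl 0 hj)
    have xpos : ∀ j : Fin n, 0 < x j → ((j : ℕ) = p ∨ (j : ℕ) = p + 1) := by
      intro j hj
      by_cases h1 : (j : ℕ) = p
      · exact Or.inl h1
      by_cases h2 : (j : ℕ) = p + 1
      · exact Or.inr h2
      by_cases h3 : (j : ℕ) = q
      · exact absurd (htn j (Or.inl h3)) (by linarith)
      by_cases h4 : (j : ℕ) = q + 1
      · exact absurd (htn j (Or.inr (Or.inl h4))) (by linarith)
      by_cases h5 : (j : ℕ) = n - 1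
      · exact absurd (htn j (Or.inr (Or.inr h5))) (by linarith)
      · exact absurd (hxsupp j h1 h2 h3 h4 h5) (by intro hh; rw [hh] at hj; exact lt_irrefl 0 hj)
    rcases hsep with ⟨σ, hσ⟩ | ⟨σ, hσ⟩
    · -- PN
      have NH : ∀ j : Fin n, u j < 0 →
          ((j : ℕ) = q ∨ (j : ℕ) = q + 1 ∨ (j : ℕ) = n - 1 ∨
            (¬(q + 1 ≤ (j : ℕ) ∧ (j : ℕ) < n - 1) ∧ (j : ℕ) < σ)) := by
        intro j hj
        rcases Dneg j hj with hx | hy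
        · rcases xneg j hx with h | h | h
          · exact Or.inl h
          · exact Or.inr (Or.inl h)
          · exact Or.inr (Or.inr (Or.inl h))
        · refine Or.inr (Or.inr (Or.inr ⟨hyne j (ne_of_gt hy), ?_⟩))
          by_contra hge
          push_neg at hge
          linarith [(hσ j).2 hge]
      have PH : ∀ j : Fin n, 0 < u j →
          ((j : ℕ) = p ∨ (j : ℕ) = p + 1 ∨
            (¬(q + 1 ≤ (j : ℕ) ∧ (j : ℕ) < n - 1) ∧ σ ≤ (j : ℕ))) := by
        intro j hj
        rcases Dpos j hj with hx | hy
        · rcases xpos j hx with h | h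
          · exact Or.inl h
          · exact Or.inr (Or.inl h)
        · refine Or.inr (Or.inr ⟨hyne j (ne_of_lt hy), ?_⟩)
          by_contra hlt
          push_neg at hlt
          linarith [(hσ j).1 hlt]
      rcases lt_trichotomy (u j0) 0 with hs0 | hs0 | hs0
      · have hs1 : 0 < u j1 := sgn2 q1 hs0
        have hs2 : u j2 < 0 := sgn1 q2 hs1
        have hs3 : 0 < u j3 := sgn2 q3 hs2
        have hs4 : u j4 < 0 := sgn1 q4 hs3
        have hs5 : 0 < u j5 := sgn2 q5 hs4
        have hs6 : u j6 < 0 := sgn1 q6 hs5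
        have f0 := NH j0 hs0
        have f1 := PH j1 hs1
        have f2 := NH j2 hs2
        have f3 := PH j3 hs3
        have f4 := NH j4 hs4
        have f5 := PH j5 hs5
        have f6 := NH j6 hs6
        omega
      · rw [hs0] at q1; simp at q1
      · have hs1 : u j1 < 0 := sgn1 q1 hs0
        have hs2 : 0 < u j2 := sgn2 q2 hs1
        have hs3 : u j3 < 0 := sgn1 q3 hs2
        have hs4 : 0 < u j4 := sgn2 q4 hs3
        have hs5 : u j5 < 0 := sgn1 q5 hs4
        have hs6 : 0 < u j6 := sgn2 q6 hs5
        have f0 := PH j0 hs0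
        have f1 := NH j1 hs1
        have f2 := PH j2 hs2
        have f3 := NH j3 hs3
        have f4 := PH j4 hs4
        have f5 := NH j5 hs5
        have f6 := PH j6 hs6
        omega
    · -- NP
      have NH : ∀ j : Fin n, u j < 0 →
          ((j : ℕ) = q ∨ (j : ℕ) = q + 1 ∨ (j : ℕ) = n - 1 ∨
            (¬(q + 1 ≤ (j : ℕ) ∧ (j : ℕ) < n - 1) ∧ σ ≤ (j : ℕ))) := by
        intro j hj
        rcases Dneg j hj with hx | hy
        · rcases xneg j hx with h | h | h
          · exact Or.inl h
          · exact Or.inr (Or.inl h)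
          · exact Or.inr (Or.inr (Or.inl h))
        · refine Or.inr (Or.inr (Or.inr ⟨hyne j (ne_of_gt hy), ?_⟩))
          by_contra hlt
          push_neg at hlt
          linarith [(hσ j).1 hlt]
      have PH : ∀ j : Fin n, 0 < u j →
          ((j : ℕ) = p ∨ (j : ℕ) = p + 1 ∨
            (¬(q + 1 ≤ (j : ℕ) ∧ (j : ℕ) < n - 1) ∧ (j : ℕ) < σ)) := by
        intro j hj
        rcases Dpos j hj with hx | hy
        · rcases xpos j hx with h | h
          · exact Or.inl h
          · exact Or.inr (Or.inl h)
        · refine Or.inr (Or.inr ⟨hyne j (ne_of_lt hy), ?_⟩)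
          by_contra hge
          push_neg at hge
          linarith [(hσ j).2 hge]
      rcases lt_trichotomy (u j0) 0 with hs0 | hs0 | hs0
      · have hs1 : 0 < u j1 := sgn2 q1 hs0
        have hs2 : u j2 < 0 := sgn1 q2 hs1
        have hs3 : 0 < u j3 := sgn2 q3 hs2
        have hs4 : u j4 < 0 := sgn1 q4 hs3
        have hs5 : 0 < u j5 := sgn2 q5 hs4
        have hs6 : u j6 < 0 := sgn1 q6 hs5
        have f0 := NH j0 hs0
        have f1 := PH j1 hs1
        have f2 := NH j2 hs2
        have f3 := PH j3 hs3
        have f4 := NH j4 hs4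
        have f5 := PH j5 hs5
        have f6 := NH j6 hs6
        omega
      · rw [hs0] at q1; simp at q1
      · have hs1 : u j1 < 0 := sgn1 q1 hs0
        have hs2 : 0 < u j2 := sgn2 q2 hs1
        have hs3 : u j3 < 0 := sgn1 q3 hs2
        have hs4 : 0 < u j4 := sgn2 q4 hs3
        have hs5 : u j5 < 0 := sgn1 q5 hs4
        have hs6 : 0 < u j6 := sgn2 q6 hs5
        have f0 := PH j0 hs0
        have f1 := NH j1 hs1
        have f2 := PH j2 hs2
        have f3 := NH j3 hs3
        have f4 := PH j4 hs4
        have f5 := NH j5 hs5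
        have f6 := PH j6 hs6
        omega



/-- All structural facts needed from an orthodox/deviant subspace. -/
def BundWith {n : ℕ} (V : Submodule ℝ (Fin n → ℝ)) (d e xB : Fin n → ℝ) (a b : ℕ) : Prop :=
  V = Submodule.span ℝ {d, e} ∧
  (xB = d ∨ xB = e) ∧
  a + 1 < b ∧ b + 2 ≤ n ∧ 6 ≤ n ∧
  (∀ j : Fin n, (j : ℕ) < a → d j = 0 ∧ e j = 0) ∧
  (∀ j : Fin n, b < (j : ℕ) → (j : ℕ) < n - 1 → d j = 0 ∧ e j = 0) ∧
  (∀ j : Fin n, (j : ℕ) = a → 0 < d j) ∧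
  (∀ j : Fin n, (j : ℕ) = b → xB j ≠ 0) ∧
  (∃ p : ℕ, a + 1 < p ∧ p + 1 < n - 1 ∧
    (∀ j : Fin n, (j : ℕ) ≠ a → (j : ℕ) ≠ a + 1 → (j : ℕ) ≠ p → (j : ℕ) ≠ p + 1 →
      (j : ℕ) ≠ n - 1 → d j = 0) ∧
    (∀ j : Fin n, (j : ℕ) = a + 1 → 0 ≤ d j) ∧
    (∀ j : Fin n, (j : ℕ) = n - 1 → d j ≤ 0)) ∧
  (∃ p q : ℕ, b = q + 1 ∧ p + 1 < q ∧ q + 1 < n - 1 ∧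
    (∀ j : Fin n, (j : ℕ) ≠ p → (j : ℕ) ≠ p + 1 → (j : ℕ) ≠ q → (j : ℕ) ≠ q + 1 →
      (j : ℕ) ≠ n - 1 → xB j = 0) ∧
    (∀ j : Fin n, (j : ℕ) = p → 0 ≤ xB j) ∧
    (∀ j : Fin n, (j : ℕ) = p + 1 → 0 ≤ xB j) ∧
    ((∀ j : Fin n, ((j : ℕ) = q ∨ (j : ℕ) = q + 1 ∨ (j : ℕ) = n - 1) → 0 ≤ xB j) ∨
     (∀ j : Fin n, ((j : ℕ) = q ∨ (j : ℕ) = q + 1 ∨ (j : ℕ) = n - 1) → xB j ≤ 0)))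

theorem domino_facts {n : ℕ} {i : Fin n} {dd : Fin n → ℝ} (h : IsPosDominoAt i dd)
    (hi : (i : ℕ) + 1 < n) :
    (0 < dd i) ∧ (∀ j : Fin n, (j : ℕ) = (i : ℕ) + 1 → 0 < dd j) ∧
    (∀ j : Fin n, (j : ℕ) ≠ (i : ℕ) → (j : ℕ) ≠ (i : ℕ) + 1 → dd j = 0) := by
  obtain ⟨hd, hpos⟩ := h
  rw [IsDominoAt, dif_pos hi] at hd
  refine ⟨hpos, ?_, hd.2⟩
  intro j hj
  have hje : j = ⟨(i : ℕ) + 1, hi⟩ := Fin.ext hj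
  rw [hje]
  nlinarith [hd.1, hpos]

theorem bund_of_orthodox {n : ℕ} {V : Submodule ℝ (Fin n → ℝ)} (h : IsOrthodox V) :
    ∃ (d e xB : Fin n → ℝ) (a b : ℕ), BundWith V d e xB a b := by
  obtain ⟨d, e, d1, d2, d3, d4, ⟨i1, i2, i3, i4, hp1, hp2, hp3, hp4, h12, h23, h34, h4n⟩,
    _, hspan, hbar_d, hdL, hbar_e, heL⟩ := h
  have hn1 : (i1 : ℕ) + 1 < n := by omega
  have hn2 : (i2 : ℕ) + 1 < n := by omega
  have hn3 : (i3 : ℕ) + 1 < n := by omega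
  have hn4 : (i4 : ℕ) + 1 < n := by omega
  obtain ⟨hd1a, hd1b, hd1s⟩ := domino_facts hp1 hn1
  obtain ⟨hd2a, hd2b, hd2s⟩ := domino_facts hp2 hn2
  obtain ⟨hd3a, hd3b, hd3s⟩ := domino_facts hp3 hn3
  obtain ⟨hd4a, hd4b, hd4s⟩ := domino_facts hp4 hn4
  have dval : ∀ j : Fin n, (j : ℕ) ≠ n - 1 → d j = d1 j + d2 j := by
    intro j hj
    have h := congr_fun hbar_d j
    rw [barVec, if_neg hj] at h
    exact h
  have eval : ∀ j : Fin n, (j : ℕ) ≠ n - 1 → e j = d3 j + d4 j := by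
    intro j hj
    have h := congr_fun hbar_e j
    rw [barVec, if_neg hj] at h
    exact h
  -- value of d1 at j with (j:ℕ) = i1
  have hd1at : ∀ j : Fin n, (j : ℕ) = (i1 : ℕ) → 0 < d1 j := by
    intro j hj; have : j = i1 := Fin.ext hj; rw [this]; exact hd1a
  have hd3at : ∀ j : Fin n, (j : ℕ) = (i3 : ℕ) → 0 < d3 j := by
    intro j hj; have : j = i3 := Fin.ext hj; rw [this]; exact hd3a
  have hd4at : ∀ j : Fin n, (j : ℕ) = (i4 : ℕ) → 0 < d4 j := by
    intro j hj; have : j = i4 := Fin.ext hj; rw [this]; exact hd4a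
  refine ⟨d, e, e, (i1 : ℕ), (i4 : ℕ) + 1, hspan, Or.inr rfl, by omega, by omega, by omega,
    ?_, ?_, ?_, ?_, ?_, ?_⟩
  · -- below a
    intro j hj
    constructor
    · rw [dval j (by omega)]
      rw [hd1s j (by omega) (by omega), hd2s j (by omega) (by omega)]
      ring
    · rw [eval j (by omega)]
      rw [hd3s j (by omega) (by omega), hd4s j (by omega) (by omega)]
      ring
  · -- above b, below n-1
    intro j hj1 hj2
    constructor
    · rw [dval j (by omega)]
      rw [hd1s j (by omega) (by omega), hd2s j (by omega) (by omega)]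
      ring
    · rw [eval j (by omega)]
      rw [hd3s j (by omega) (by omega), hd4s j (by omega) (by omega)]
      ring
  · -- d positive at a
    intro j hj
    rw [dval j (by omega)]
    rw [hd2s j (by omega) (by omega)]
    have := hd1at j hj
    linarith
  · -- xB = e nonzero at b
    intro j hj
    rw [eval j (by omega)]
    rw [hd3s j (by omega) (by omega)]
    have := hd4b j (by omega)
    intro hcon
    linarith
  · -- shape A with p = i2
    refine ⟨(i2 : ℕ), by omega, by omega, ?_, ?_, ?_⟩
    · intro j h1 h2 h3 h4 h5
      rw [dval j h5]
      rw [hd1s j h1 h2, hd2s j h3 h4]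
      ring
    · intro j hj
      rw [dval j (by omega)]
      rw [hd2s j (by omega) (by omega)]
      have := hd1b j hj
      linarith
    · intro j hj
      exact le_of_lt (hdL j hj)
  · -- shape B with p = i3, q = i4
    refine ⟨(i3 : ℕ), (i4 : ℕ), rfl, by omega, by omega, ?_, ?_, ?_, Or.inl ?_⟩
    · intro j h1 h2 h3 h4 h5
      rw [eval j h5]
      rw [hd3s j h1 h2, hd4s j h3 h4]
      ring
    · intro j hj
      rw [eval j (by omega)]
      rw [hd4s j (by omega) (by omega)]
      have := hd3at j hj
      linarith
    · intro j hj
      rw [eval j (by omega)]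
      rw [hd4s j (by omega) (by omega)]
      have := hd3b j hj
      linarith
    · intro j hj
      rcases hj with hj | hj | hj
      · rw [eval j (by omega), hd3s j (by omega) (by omega)]
        have := hd4at j hj
        linarith
      · rw [eval j (by omega), hd3s j (by omega) (by omega)]
        have := hd4b j hj
        linarith
      · exact le_of_lt (heL j hj)

theorem bund_of_deviant {n : ℕ} {V : Submodule ℝ (Fin n → ℝ)} (h : IsDeviant V) :
    ∃ (d e xB : Fin n → ℝ) (a b : ℕ), BundWith V d e xB a b := by
  obtain ⟨d, e, d1, d2, d3, d4, ⟨i1, i2, i3, i4, hp1, hp2, hp3, hp4, h12, h23, h34, h4n⟩,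
    _, hspan, hbar_d, hdL, he⟩ := h
  have hn1 : (i1 : ℕ) + 1 < n := by omega
  have hn2 : (i2 : ℕ) + 1 < n := by omega
  have hn3 : (i3 : ℕ) + 1 < n := by omega
  have hn4 : (i4 : ℕ) + 1 < n := by omega
  obtain ⟨hd1a, hd1b, hd1s⟩ := domino_facts hp1 hn1
  obtain ⟨hd2a, hd2b, hd2s⟩ := domino_facts hp2 hn2
  obtain ⟨hd3a, hd3b, hd3s⟩ := domino_facts hp3 hn3
  obtain ⟨hd4a, hd4b, hd4s⟩ := domino_facts hp4 hn4
  have dval : ∀ j : Fin n, (j : ℕ) ≠ n - 1 → d j = d1 j - d4 j := by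
    intro j hj
    have h := congr_fun hbar_d j
    rw [barVec, if_neg hj] at h
    exact h
  have eval : ∀ j : Fin n, e j = d1 j + d2 j + d3 j := fun j => congr_fun he j
  have hd1at : ∀ j : Fin n, (j : ℕ) = (i1 : ℕ) → 0 < d1 j := by
    intro j hj; have : j = i1 := Fin.ext hj; rw [this]; exact hd1a
  have hd4at : ∀ j : Fin n, (j : ℕ) = (i4 : ℕ) → 0 < d4 j := by
    intro j hj; have : j = i4 := Fin.ext hj; rw [this]; exact hd4a
  refine ⟨d, e, d, (i1 : ℕ), (i4 : ℕ) + 1, hspan, Or.inl rfl, by omega, by omega, by omega,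
    ?_, ?_, ?_, ?_, ?_, ?_⟩
  · intro j hj
    constructor
    · rw [dval j (by omega)]
      rw [hd1s j (by omega) (by omega), hd4s j (by omega) (by omega)]
      ring
    · rw [eval j]
      rw [hd1s j (by omega) (by omega), hd2s j (by omega) (by omega),
        hd3s j (by omega) (by omega)]
      ring
  · intro j hj1 hj2
    constructor
    · rw [dval j (by omega)]
      rw [hd1s j (by omega) (by omega), hd4s j (by omega) (by omega)]
      ring
    · rw [eval j]
      rw [hd1s j (by omega) (by omega), hd2s j (by omega) (by omega),
        hd3s j (by omega) (by omega)]
      ring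
  · intro j hj
    rw [dval j (by omega)]
    rw [hd4s j (by omega) (by omega)]
    have := hd1at j hj
    linarith
  · intro j hj
    rw [dval j (by omega)]
    rw [hd1s j (by omega) (by omega)]
    have := hd4b j (by omega)
    intro hcon
    linarith
  · -- shape A with p = i4
    refine ⟨(i4 : ℕ), by omega, by omega, ?_, ?_, ?_⟩
    · intro j h1 h2 h3 h4 h5
      rw [dval j h5]
      rw [hd1s j h1 h2, hd4s j h3 h4]
      ring
    · intro j hj
      rw [dval j (by omega)]
      rw [hd4s j (by omega) (by omega)]
      have := hd1b j hj
      linarith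
    · intro j hj
      exact le_of_lt (hdL j hj)
  · -- shape B with p = i1, q = i4
    refine ⟨(i1 : ℕ), (i4 : ℕ), rfl, by omega, by omega, ?_, ?_, ?_, Or.inr ?_⟩
    · intro j h1 h2 h3 h4 h5
      rw [dval j h5]
      rw [hd1s j h1 h2, hd4s j h3 h4]
      ring
    · intro j hj
      rw [dval j (by omega)]
      rw [hd4s j (by omega) (by omega)]
      have := hd1at j hj
      linarith
    · intro j hj
      rw [dval j (by omega)]
      rw [hd4s j (by omega) (by omega)]
      have := hd1b j hj
      linarith
    · intro j hj
      rcases hj with hj | hj | hj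
      · rw [dval j (by omega), hd1s j (by omega) (by omega)]
        have := hd4at j hj
        linarith
      · rw [dval j (by omega), hd1s j (by omega) (by omega)]
        have := hd4b j hj
        linarith
      · exact le_of_lt (hdL j hj)


theorem clashA {n : ℕ} {Z : Matrix (Fin 6) (Fin n) ℝ} (hZ : MinorsPos Z)
    {V V' : Submodule ℝ (Fin n → ℝ)} {d e xB d' e' xB' : Fin n → ℝ} {a b a' b' : ℕ}
    (hB : BundWith V d e xB a b) (hB' : BundWith V' d' e' xB' a' b')
    (hV' : IsTNNSubspace 2 n V')
    (hZV : V.map Z.mulVecLin = V'.map Z.mulVecLin)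
    (hlt : a < a') : False := by
  obtain ⟨hspan, _, hab, hbn, hn6, hbelow, habove, hda, hxb,
    ⟨p, hap, hpL, hsuppd, hda1, hdL⟩, _⟩ := hB
  obtain ⟨hspan', _, hab', hbn', _, hbelow', _, _, _, _, _⟩ := hB'
  have hdV : d ∈ V := by
    rw [hspan]; exact Submodule.subset_span (Set.mem_insert _ _)
  have hmem : Z.mulVecLin d ∈ V'.map Z.mulVecLin := by
    rw [← hZV]; exact Submodule.mem_map_of_mem hdV
  obtain ⟨y, hyV'0, hZy⟩ := hmem
  have hyV' : y ∈ V' := hyV'0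
  have hymem : y ∈ V' := hyV'
  rw [hspan', Submodule.mem_span_pair] at hymem
  obtain ⟨α, β, hy⟩ := hymem
  have hyj : ∀ j, y j = α * d' j + β * e' j := by
    intro j; rw [← hy]; simp
  have hy0 : ∀ j : Fin n, (j : ℕ) ≤ a → y j = 0 := by
    intro j hj
    rw [hyj, (hbelow' j (by omega)).1, (hbelow' j (by omega)).2]
    ring
  have hsep := sep_of_no_alt3 (tnn_no_alt3 hV' hyV')
  have h7 : NoAlt7 (fun j => d j - y j) :=
    refuteA hap hpL hsuppd hda hda1 hdL hy0 hsep
  have hker : Z.mulVec (fun j => d j - y j) = 0 := by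
    have h1 : (fun j => d j - y j) = d - y := rfl
    rw [h1, ← Matrix.mulVecLin_apply, map_sub, hZy, sub_self]
  have hu0 := master hZ hker (cover_to_scover hn6 (cover_of_noAlt7 h7))
  have han : a < n := by omega
  have h3 : d ⟨a, han⟩ - y ⟨a, han⟩ = 0 := congr_fun hu0 ⟨a, han⟩
  have h1 : 0 < d ⟨a, han⟩ := hda _ rfl
  have h2 : y ⟨a, han⟩ = 0 := by
    rw [hyj, (hbelow' ⟨a, han⟩ (by simp; omega)).1, (hbelow' ⟨a, han⟩ (by simp; omega)).2]
    ring
  rw [h2] at h3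
  linarith

theorem clashB {n : ℕ} {Z : Matrix (Fin 6) (Fin n) ℝ} (hZ : MinorsPos Z)
    {V V' : Submodule ℝ (Fin n → ℝ)} {d e xB d' e' xB' : Fin n → ℝ} {a b a' b' : ℕ}
    (hB : BundWith V d e xB a b) (hB' : BundWith V' d' e' xB' a' b')
    (hV' : IsTNNSubspace 2 n V')
    (hZV : V.map Z.mulVecLin = V'.map Z.mulVecLin)
    (hgt : b' < b) : False := by
  obtain ⟨hspan, hxBor, hab, hbn, hn6, hbelow, habove, hda, hxb, _,
    ⟨p, q, hbq, hpq, hqL, hsuppx, hxp, hxp1, htail⟩⟩ := hB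
  obtain ⟨hspan', _, hab', hbn', _, _, habove', _, _, _, _⟩ := hB'
  have hxV : xB ∈ V := by
    rw [hspan]
    rcases hxBor with h | h
    · rw [h]; exact Submodule.subset_span (Set.mem_insert _ _)
    · rw [h]; exact Submodule.subset_span (Set.mem_insert_of_mem _ rfl)
  have hmem : Z.mulVecLin xB ∈ V'.map Z.mulVecLin := by
    rw [← hZV]; exact Submodule.mem_map_of_mem hxV
  obtain ⟨y, hyV'0, hZy⟩ := hmem
  have hyV' : y ∈ V' := hyV'0
  have hymem : y ∈ V' := hyV'
  rw [hspan', Submodule.mem_span_pair] at hymem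
  obtain ⟨α, β, hy⟩ := hymem
  have hyj : ∀ j, y j = α * d' j + β * e' j := by
    intro j; rw [← hy]; simp
  have hy0 : ∀ j : Fin n, q + 1 ≤ (j : ℕ) → (j : ℕ) < n - 1 → y j = 0 := by
    intro j hj1 hj2
    rw [hyj, (habove' j (by omega) (by omega)).1, (habove' j (by omega) (by omega)).2]
    ring
  have hsep := sep_of_no_alt3 (tnn_no_alt3 hV' hyV')
  have h7 : NoAlt7 (fun j => xB j - y j) :=
    refuteB hpq hqL hsuppx hxp hxp1 htail hy0 hsep
  have hker : Z.mulVec (fun j => xB j - y j) = 0 := by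
    have h1 : (fun j => xB j - y j) = xB - y := rfl
    rw [h1, ← Matrix.mulVecLin_apply, map_sub, hZy, sub_self]
  have hu0 := master hZ hker (cover_to_scover hn6 (cover_of_noAlt7 h7))
  have hbnlt : b < n := by omega
  have h3 : xB ⟨b, hbnlt⟩ - y ⟨b, hbnlt⟩ = 0 := congr_fun hu0 ⟨b, hbnlt⟩
  have h1 : xB ⟨b, hbnlt⟩ ≠ 0 := hxb _ rfl
  have h2 : y ⟨b, hbnlt⟩ = 0 := by
    rw [hyj, (habove' ⟨b, hbnlt⟩ (by simp; omega) (by simp; omega)).1,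
      (habove' ⟨b, hbnlt⟩ (by simp; omega) (by simp; omega)).2]
    ring
  rw [h2] at h3
  exact h1 (by linarith)

theorem minchar {n : ℕ} {V : Submodule ℝ (Fin n → ℝ)} {d e xB : Fin n → ℝ} {a b : ℕ}
    (hB : BundWith V d e xB a b) :
    ∀ j : Fin n,
      (((∃ v ∈ V, v j ≠ 0) ∧ ∀ j' : Fin n, j' < j → ∀ v ∈ V, v j' = 0) ↔ (j : ℕ) = a) := by
  obtain ⟨hspan, hxBor, hab, hbn, hn6, hbelow, habove, hda, hxb, _, _⟩ := hB
  have hdV : d ∈ V := by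
    rw [hspan]; exact Submodule.subset_span (Set.mem_insert _ _)
  have hvanish : ∀ v ∈ V, ∀ j : Fin n, (j : ℕ) < a → v j = 0 := by
    intro v hv j hj
    rw [hspan, Submodule.mem_span_pair] at hv
    obtain ⟨α, β, hv⟩ := hv
    rw [← hv]
    have h1 := (hbelow j hj).1
    have h2 := (hbelow j hj).2
    simp [h1, h2]
  have han : a < n := by omega
  intro j
  constructor
  · rintro ⟨⟨v, hv, hvj⟩, hmin⟩
    rcases lt_trichotomy ((j : ℕ)) a with h | h | h
    · exact absurd (hvanish v hv j h) hvj
    · exact h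
    · exfalso
      have hja : (⟨a, han⟩ : Fin n) < j := h
      have hz := hmin ⟨a, han⟩ hja d hdV
      have h2 := hda ⟨a, han⟩ rfl
      rw [hz] at h2
      exact lt_irrefl 0 h2
  · intro hj
    refine ⟨⟨d, hdV, ?_⟩, ?_⟩
    · exact ne_of_gt (hda j hj)
    · intro j' hj' v hv
      refine hvanish v hv j' ?_
      have : (j' : ℕ) < (j : ℕ) := hj'
      omega

theorem maxchar {n : ℕ} {V : Submodule ℝ (Fin n → ℝ)} {d e xB : Fin n → ℝ} {a b : ℕ}
    (hB : BundWith V d e xB a b) :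
    ∀ j : Fin n, (j : ℕ) + 2 ≤ n →
      (((∃ v ∈ V, v j ≠ 0) ∧
          ∀ j' : Fin n, j < j' → (j' : ℕ) + 2 ≤ n → ∀ v ∈ V, v j' = 0) ↔ (j : ℕ) = b) := by
  obtain ⟨hspan, hxBor, hab, hbn, hn6, hbelow, habove, hda, hxb, _, _⟩ := hB
  have hxV : xB ∈ V := by
    rw [hspan]
    rcases hxBor with h | h
    · rw [h]; exact Submodule.subset_span (Set.mem_insert _ _)
    · rw [h]; exact Submodule.subset_span (Set.mem_insert_of_mem _ rfl)
  have hvanish : ∀ v ∈ V, ∀ j : Fin n, b < (j : ℕ) → (j : ℕ) < n - 1 → v j = 0 := by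
    intro v hv j hj1 hj2
    rw [hspan, Submodule.mem_span_pair] at hv
    obtain ⟨α, β, hv⟩ := hv
    rw [← hv]
    have h1 := (habove j hj1 hj2).1
    have h2 := (habove j hj1 hj2).2
    simp [h1, h2]
  have hbnlt : b < n := by omega
  intro j hj2n
  constructor
  · rintro ⟨⟨v, hv, hvj⟩, hmax⟩
    rcases lt_trichotomy ((j : ℕ)) b with h | h | h
    · exfalso
      have hjb : j < (⟨b, hbnlt⟩ : Fin n) := h
      have hz := hmax ⟨b, hbnlt⟩ hjb (by simp; omega) xB hxV
      exact (hxb ⟨b, hbnlt⟩ rfl) hz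
    · exact h
    · exact absurd (hvanish v hv j h (by omega)) hvj
  · intro hj
    refine ⟨⟨xB, hxV, hxb j hj⟩, ?_⟩
    intro j' hjj' hj'2 v hv
    refine hvanish v hv j' ?_ (by omega)
    have : (j : ℕ) < (j' : ℕ) := hjj'
    omega

end ESR

theorem equal_support_range (n : ℕ) (Z : Matrix (Fin 6) (Fin n) ℝ)
    (hZ : MinorsPos Z) (V V' : Submodule ℝ (Fin n → ℝ))
    (hV : IsTNNSubspace 2 n V) (hV' : IsTNNSubspace 2 n V')
    (hVod : IsOrthodox V ∨ IsDeviant V) (hV'od : IsOrthodox V' ∨ IsDeviant V')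
    (hZV : V.map Z.mulVecLin = V'.map Z.mulVecLin) :
    (∀ j : Fin n,
      ((∃ v ∈ V, v j ≠ 0) ∧ ∀ j' : Fin n, j' < j → ∀ v ∈ V, v j' = 0) ↔
      ((∃ v ∈ V', v j ≠ 0) ∧ ∀ j' : Fin n, j' < j → ∀ v ∈ V', v j' = 0)) ∧
    (∀ j : Fin n, (j : ℕ) + 2 ≤ n →
      (((∃ v ∈ V, v j ≠ 0) ∧
          ∀ j' : Fin n, j < j' → (j' : ℕ) + 2 ≤ n → ∀ v ∈ V, v j' = 0) ↔
        ((∃ v ∈ V', v j ≠ 0) ∧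
          ∀ j' : Fin n, j < j' → (j' : ℕ) + 2 ≤ n → ∀ v ∈ V', v j' = 0))) := by
  obtain ⟨d, e, xB, a, b, hB⟩ := hVod.elim ESR.bund_of_orthodox ESR.bund_of_deviant
  obtain ⟨d', e', xB', a', b', hB'⟩ := hV'od.elim ESR.bund_of_orthodox ESR.bund_of_deviant
  have haa : a = a' := by
    rcases lt_trichotomy a a' with h | h | h
    · exact (ESR.clashA hZ hB hB' hV' hZV h).elim
    · exact h
    · exact (ESR.clashA hZ hB' hB hV hZV.symm h).elim
  have hbb : b = b' := by
    rcases lt_trichotomy b' b with h | h | h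
    · exact (ESR.clashB hZ hB hB' hV' hZV h).elim
    · exact h.symm
    · exact (ESR.clashB hZ hB' hB hV hZV.symm h).elim
  constructor
  · intro j
    rw [ESR.minchar hB j, ESR.minchar hB' j, haa]
  · intro j hj
    rw [ESR.maxchar hB j hj, ESR.maxchar hB' j hj, hbb]
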